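/- arXiv:1612.01767 — 7 statements merged into one kernel-verified Lean document; each statement's English description precedes it below -/
import Mathlib

section
/- For nonnegative n×n real matrices A and B, the spectral radius of the Hadamard (entrywise) product satisfies ρ(A ∘ B) ≤ ρ(AB∘BA)^{1/2} ≤ ρ(AB). -/
open Matrix

/-- Spectral radius of a real matrix: max modulus of its (complex) eigenvalues. -/
noncomputable def specRad {N : Type*} [Fintype N] [DecidableEq N] (A : Matrix N N ℝ) : ℝ :=
  (spectralRadius ℂ (A.map Complex.ofReal)).toReal

/-- Operator norm induced by the Euclidean (ℓ²) norm. -/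
noncomputable def l2OpNorm {N : Type*} [Fintype N] [DecidableEq N] (A : Matrix N N ℝ) : ℝ :=
  ‖Matrix.toEuclideanCLM (𝕜 := ℝ) A‖

/-- Entrywise α-th power (with the convention 0^0 = 1, as for `Real.rpow`). -/
noncomputable def hadPow {N : Type*} (A : Matrix N N ℝ) (α : ℝ) : Matrix N N ℝ :=
  fun i j => A i j ^ α

section Aux

open scoped ENNReal NNReal
open Filter Topology Complex

attribute [local instance] Matrix.linftyOpNormedRing Matrix.linftyOpNormedAlgebra

variable {N : Type*} [Fintype N] [DecidableEq N]

noncomputable local instance : CompleteSpace (Matrix N N ℂ) :=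
  FiniteDimensional.complete ℂ _

/-- spectral radius at the `ℝ≥0∞` level -/
noncomputable def sRad (M : Matrix N N ℝ) : ℝ≥0∞ :=
  spectralRadius ℂ (M.map Complex.ofReal)

lemma specRad_eq (M : Matrix N N ℝ) : specRad M = (sRad M).toReal := rfl

lemma mapC_mul (C D : Matrix N N ℝ) :
    (C * D).map Complex.ofReal = C.map Complex.ofReal * D.map Complex.ofReal := by
  ext i j
  simp [Matrix.map_apply, Matrix.mul_apply]

lemma mapC_pow (C : Matrix N N ℝ) (n : ℕ) :
    (C.map Complex.ofReal) ^ n = (C ^ n).map Complex.ofReal := by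
  induction n with
  | zero =>
      ext i j
      simp [Matrix.map_apply, Matrix.one_apply]
      split <;> simp_all
  | succ k ih => rw [pow_succ, pow_succ, ih, mapC_mul]

lemma sum_mul_sum_le (f g : N → ℝ) (hf : ∀ l, 0 ≤ f l) (hg : ∀ l, 0 ≤ g l) :
    ∑ l, f l * g l ≤ (∑ l, f l) * (∑ l, g l) := by
  calc ∑ l, f l * g l ≤ ∑ l, f l * (∑ m, g m) := by
        refine Finset.sum_le_sum fun l _ => ?_
        exact mul_le_mul_of_nonneg_left
          (Finset.single_le_sum (fun m _ => hg m) (Finset.mem_univ l)) (hf l)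
    _ = (∑ l, f l) * (∑ l, g l) := by rw [← Finset.sum_mul]

lemma mul_nonneg_entries {C D : Matrix N N ℝ} (hC : ∀ i j, 0 ≤ C i j)
    (hD : ∀ i j, 0 ≤ D i j) : ∀ i j, 0 ≤ (C * D) i j := fun i j => by
  rw [Matrix.mul_apply]
  exact Finset.sum_nonneg fun l _ => mul_nonneg (hC i l) (hD l j)

lemma mul_le_mul_entries {C D C' D' : Matrix N N ℝ} (hC : ∀ i j, 0 ≤ C i j)
    (hC' : ∀ i j, 0 ≤ C' i j) (hCD : ∀ i j, C i j ≤ D i j)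
    (hCD' : ∀ i j, C' i j ≤ D' i j) : ∀ i j, (C * C') i j ≤ (D * D') i j := fun i j => by
  rw [Matrix.mul_apply, Matrix.mul_apply]
  exact Finset.sum_le_sum fun l _ =>
    mul_le_mul (hCD i l) (hCD' l j) (hC' l j) ((hC i l).trans (hCD i l))

lemma pow_nonneg_entries {C : Matrix N N ℝ} (hC : ∀ i j, 0 ≤ C i j) (n : ℕ) :
    ∀ i j, 0 ≤ (C ^ n) i j := by
  induction n with
  | zero =>
      intro i j
      simp only [pow_zero, Matrix.one_apply]
      split <;> simp
  | succ k ih => rw [pow_succ]; exact mul_nonneg_entries ih hC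

lemma pow_le_pow_entries {C D : Matrix N N ℝ} (hC : ∀ i j, 0 ≤ C i j)
    (hCD : ∀ i j, C i j ≤ D i j) (n : ℕ) : ∀ i j, (C ^ n) i j ≤ (D ^ n) i j := by
  induction n with
  | zero => intro i j; simp
  | succ k ih =>
      rw [pow_succ, pow_succ]
      exact mul_le_mul_entries (pow_nonneg_entries hC k) hC ih hCD

lemma nnnorm_mapC (M : Matrix N N ℝ) (hM : ∀ i j, 0 ≤ M i j) :
    ‖M.map Complex.ofReal‖₊ = Finset.univ.sup fun i => ∑ j, (M i j).toNNReal := by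
  rw [Matrix.linfty_opNNNorm_def]
  refine Finset.sup_congr rfl fun i _ => Finset.sum_congr rfl fun j _ => ?_
  rw [Matrix.map_apply, Complex.nnnorm_real, Real.nnnorm_of_nonneg (hM i j),
    Real.toNNReal_of_nonneg (hM i j)]

lemma nnnorm_le_of_entries_le {C D : Matrix N N ℝ} (hC : ∀ i j, 0 ≤ C i j)
    (hCD : ∀ i j, C i j ≤ D i j) :
    ‖C.map Complex.ofReal‖₊ ≤ ‖D.map Complex.ofReal‖₊ := by
  rw [nnnorm_mapC C hC, nnnorm_mapC D (fun i j => (hC i j).trans (hCD i j))]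
  exact Finset.sup_mono_fun fun i _ => Finset.sum_le_sum fun j _ =>
    Real.toNNReal_mono (hCD i j)

lemma gelfand (M : Matrix N N ℝ) :
    Tendsto (fun n : ℕ => (‖(M.map Complex.ofReal) ^ n‖₊ : ℝ≥0∞) ^ (1 / n : ℝ))
      atTop (𝓝 (sRad M)) :=
  spectrum.pow_nnnorm_pow_one_div_tendsto_nhds_spectralRadius _

lemma sRad_ne_top (M : Matrix N N ℝ) : sRad M ≠ ⊤ := by
  have h := spectrum.spectralRadius_le_pow_nnnorm_pow_one_div ℂ (M.map Complex.ofReal) 0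
  refine ne_top_of_le_ne_top ?_ h
  simp only [Nat.cast_zero, zero_add, div_one]
  rw [ENNReal.rpow_one, ENNReal.rpow_one]
  exact ENNReal.mul_ne_top ENNReal.coe_ne_top ENNReal.coe_ne_top

/-- Monotonicity of the spectral radius for entrywise nonnegative matrices. -/
lemma sRad_mono {C D : Matrix N N ℝ} (hC : ∀ i j, 0 ≤ C i j)
    (hCD : ∀ i j, C i j ≤ D i j) : sRad C ≤ sRad D := by
  refine le_of_tendsto_of_tendsto' (gelfand C) (gelfand D) fun n => ?_
  refine ENNReal.rpow_le_rpow ?_ (by positivity)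
  rw [mapC_pow, mapC_pow]
  exact_mod_cast nnnorm_le_of_entries_le (pow_nonneg_entries hC n)
    (pow_le_pow_entries hC hCD n)

lemma had_mul_had_le {X Y X' Y' : Matrix N N ℝ} (hX : ∀ i j, 0 ≤ X i j)
    (hY : ∀ i j, 0 ≤ Y i j) (hX' : ∀ i j, 0 ≤ X' i j) (hY' : ∀ i j, 0 ≤ Y' i j) :
    ∀ i j, ((X ⊙ Y) * (X' ⊙ Y')) i j ≤ ((X * X') ⊙ (Y * Y')) i j := fun i j => by
  rw [Matrix.mul_apply, Matrix.hadamard_apply, Matrix.mul_apply, Matrix.mul_apply]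
  calc ∑ l, (X ⊙ Y) i l * (X' ⊙ Y') l j
      = ∑ l, (X i l * X' l j) * (Y i l * Y' l j) := by
        refine Finset.sum_congr rfl fun l _ => ?_
        simp only [Matrix.hadamard_apply]; ring
    _ ≤ (∑ l, X i l * X' l j) * (∑ l, Y i l * Y' l j) :=
        sum_mul_sum_le _ _ (fun l => mul_nonneg (hX i l) (hX' l j))
          (fun l => mul_nonneg (hY i l) (hY' l j))

lemma had_nonneg {X Y : Matrix N N ℝ} (hX : ∀ i j, 0 ≤ X i j) (hY : ∀ i j, 0 ≤ Y i j) :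
    ∀ i j, 0 ≤ (X ⊙ Y) i j := fun i j => mul_nonneg (hX i j) (hY i j)

lemma had_pow_le {X Y : Matrix N N ℝ} (hX : ∀ i j, 0 ≤ X i j) (hY : ∀ i j, 0 ≤ Y i j)
    (n : ℕ) : ∀ i j, ((X ⊙ Y) ^ n) i j ≤ ((X ^ n) ⊙ (Y ^ n)) i j := by
  induction n with
  | zero =>
      intro i j
      simp only [pow_zero, Matrix.hadamard_apply, Matrix.one_apply]
      split <;> simp
  | succ k ih =>
      intro i j
      rw [pow_succ]
      calc ((X ⊙ Y) ^ k * (X ⊙ Y)) i j ≤ (((X ^ k) ⊙ (Y ^ k)) * (X ⊙ Y)) i j :=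
            mul_le_mul_entries (pow_nonneg_entries (had_nonneg hX hY) k)
              (had_nonneg hX hY) ih (fun _ _ => le_rfl) i j
        _ ≤ ((X ^ k * X) ⊙ (Y ^ k * Y)) i j :=
            had_mul_had_le (pow_nonneg_entries hX k) (pow_nonneg_entries hY k) hX hY i j
        _ = ((X ^ (k+1)) ⊙ (Y ^ (k+1))) i j := by rw [pow_succ, pow_succ]

lemma nnnorm_had_le {X Y : Matrix N N ℝ} (hX : ∀ i j, 0 ≤ X i j) (hY : ∀ i j, 0 ≤ Y i j) :
    ‖(X ⊙ Y).map Complex.ofReal‖₊ ≤ ‖X.map Complex.ofReal‖₊ * ‖Y.map Complex.ofReal‖₊ := by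
  rw [nnnorm_mapC _ (had_nonneg hX hY), nnnorm_mapC X hX, nnnorm_mapC Y hY]
  refine Finset.sup_le fun i _ => ?_
  calc ∑ j, ((X ⊙ Y) i j).toNNReal
      ≤ ∑ j, (X i j).toNNReal * (Finset.univ.sup fun i' => ∑ j', (Y i' j').toNNReal) := by
        refine Finset.sum_le_sum fun j _ => ?_
        have h1 : ((X ⊙ Y) i j).toNNReal = (X i j).toNNReal * (Y i j).toNNReal := by
          rw [Matrix.hadamard_apply, Real.toNNReal_mul (hX i j)]
        rw [h1]
        refine mul_le_mul_right ?_ _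
        exact le_trans
          (Finset.single_le_sum (f := fun j' => (Y i j').toNNReal)
            (fun j' _ => zero_le) (Finset.mem_univ j))
          (Finset.le_sup (f := fun i' => ∑ j', (Y i' j').toNNReal) (Finset.mem_univ i))
    _ = (∑ j, (X i j).toNNReal) * (Finset.univ.sup fun i' => ∑ j', (Y i' j').toNNReal) := by
        rw [← Finset.sum_mul]
    _ ≤ (Finset.univ.sup fun i' => ∑ j', (X i' j').toNNReal) *
          (Finset.univ.sup fun i' => ∑ j', (Y i' j').toNNReal) :=
        mul_le_mul_left
          (Finset.le_sup (f := fun i' => ∑ j', (X i' j').toNNReal) (Finset.mem_univ i)) _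

/-- Submultiplicativity of the spectral radius w.r.t. Hadamard products of
nonnegative matrices. -/
lemma sRad_had_le {X Y : Matrix N N ℝ} (hX : ∀ i j, 0 ≤ X i j) (hY : ∀ i j, 0 ≤ Y i j) :
    sRad (X ⊙ Y) ≤ sRad X * sRad Y := by
  have hmul : Tendsto (fun n : ℕ =>
      ((‖(X.map Complex.ofReal) ^ n‖₊ : ℝ≥0∞) ^ (1 / n : ℝ)) *
      ((‖(Y.map Complex.ofReal) ^ n‖₊ : ℝ≥0∞) ^ (1 / n : ℝ))) atTop
      (𝓝 (sRad X * sRad Y)) :=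
    ENNReal.Tendsto.mul (gelfand X) (Or.inr (sRad_ne_top Y)) (gelfand Y)
      (Or.inr (sRad_ne_top X))
  refine le_of_tendsto_of_tendsto' (gelfand (X ⊙ Y)) hmul fun n => ?_
  rw [← ENNReal.mul_rpow_of_nonneg _ _ (by positivity)]
  refine ENNReal.rpow_le_rpow ?_ (by positivity)
  rw [mapC_pow, mapC_pow, mapC_pow, ← ENNReal.coe_mul]
  refine ENNReal.coe_le_coe.mpr ?_
  calc ‖((X ⊙ Y) ^ n).map Complex.ofReal‖₊
      ≤ ‖((X ^ n) ⊙ (Y ^ n)).map Complex.ofReal‖₊ :=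
        nnnorm_le_of_entries_le (pow_nonneg_entries (had_nonneg hX hY) n)
          (had_pow_le hX hY n)
    _ ≤ _ := nnnorm_had_le (pow_nonneg_entries hX n) (pow_nonneg_entries hY n)

lemma spectralRadius_eq_diff (a : Matrix N N ℂ) :
    spectralRadius ℂ a = ⨆ k ∈ spectrum ℂ a \ {0}, (‖k‖₊ : ℝ≥0∞) := by
  rw [spectralRadius]
  refine le_antisymm (iSup₂_le fun k hk => ?_)
    (iSup₂_le fun k hk => le_iSup₂ (f := fun k _ => (‖k‖₊ : ℝ≥0∞)) k hk.1)
  by_cases h : k = 0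
  · simp [h]
  · exact le_iSup₂ (f := fun k _ => (‖k‖₊ : ℝ≥0∞)) k ⟨hk, h⟩

lemma spectralRadius_mul_comm (a b : Matrix N N ℂ) :
    spectralRadius ℂ (a * b) = spectralRadius ℂ (b * a) := by
  rw [spectralRadius_eq_diff, spectralRadius_eq_diff, spectrum.nonzero_mul_comm]

lemma sRad_mul_comm (C D : Matrix N N ℝ) : sRad (C * D) = sRad (D * C) := by
  unfold sRad
  rw [mapC_mul, mapC_mul, spectralRadius_mul_comm]

lemma sRad_sq_le (M : Matrix N N ℝ) : sRad M * sRad M ≤ sRad (M * M) := by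
  have key : ∀ z ∈ spectrum ℂ (M.map Complex.ofReal),
      (‖z‖₊ : ℝ≥0∞) ≤ sRad (M * M) ^ (1 / 2 : ℝ) := by
    intro z hz
    have hz2 : z ^ 2 ∈ spectrum ℂ ((M.map Complex.ofReal) ^ 2) :=
      spectrum.pow_image_subset (𝕜 := ℂ) (M.map Complex.ofReal) 2 ⟨z, hz, rfl⟩
    have h2 : ((M.map Complex.ofReal) ^ 2) = (M * M).map Complex.ofReal := by
      rw [mapC_pow, pow_two]
    rw [h2] at hz2
    have hle : (‖z ^ 2‖₊ : ℝ≥0∞) ≤ sRad (M * M) :=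
      le_iSup₂ (f := fun k (_ : k ∈ spectrum ℂ ((M * M).map Complex.ofReal)) =>
        (‖k‖₊ : ℝ≥0∞)) _ hz2
    have hsq : ((‖z‖₊ : ℝ≥0∞) ^ (2 : ℕ)) ≤ sRad (M * M) := by
      rw [← ENNReal.coe_pow]
      calc ((‖z‖₊ ^ 2 : ℝ≥0) : ℝ≥0∞) = (‖z ^ 2‖₊ : ℝ≥0∞) := by rw [nnnorm_pow]
        _ ≤ _ := hle
    calc (‖z‖₊ : ℝ≥0∞) = (((‖z‖₊ : ℝ≥0∞) ^ (2 : ℕ)) ^ ((2 : ℕ)⁻¹ : ℝ)) := by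
          rw [← ENNReal.rpow_natCast _ 2, ← ENNReal.rpow_mul]
          norm_num
      _ ≤ sRad (M * M) ^ (1 / 2 : ℝ) := by
          rw [one_div]
          exact ENNReal.rpow_le_rpow hsq (by norm_num)
  have h1 : sRad M ≤ sRad (M * M) ^ (1 / 2 : ℝ) := iSup₂_le key
  calc sRad M * sRad M ≤ (sRad (M * M) ^ (1 / 2 : ℝ)) * (sRad (M * M) ^ (1 / 2 : ℝ)) :=
        mul_le_mul' h1 h1
    _ = sRad (M * M) := by
        rw [← ENNReal.rpow_add_of_nonneg _ _ (by norm_num) (by norm_num)]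
        norm_num

end Aux

theorem stmt0 {N : Type*} [Fintype N] [DecidableEq N] (A B : Matrix N N ℝ)
    (hA : ∀ i j, 0 ≤ A i j) (hB : ∀ i j, 0 ≤ B i j) :
    specRad (A ⊙ B) ≤ specRad ((A * B) ⊙ (B * A)) ^ ((1 : ℝ) / 2) ∧
      specRad ((A * B) ⊙ (B * A)) ^ ((1 : ℝ) / 2) ≤ specRad (A * B) := by
  have hAB : ∀ i j, 0 ≤ (A * B) i j := mul_nonneg_entries hA hB
  have hBA : ∀ i j, 0 ≤ (B * A) i j := mul_nonneg_entries hB hA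
  have hHad : ∀ i j, 0 ≤ (A ⊙ B) i j := had_nonneg hA hB
  have h1 : sRad (A ⊙ B) * sRad (A ⊙ B) ≤ sRad ((A * B) ⊙ (B * A)) := by
    refine (sRad_sq_le (A ⊙ B)).trans (sRad_mono (mul_nonneg_entries hHad hHad) ?_)
    intro i j
    have hc : (A ⊙ B) * (A ⊙ B) = (A ⊙ B) * (B ⊙ A) := by rw [Matrix.hadamard_comm B A]
    rw [hc]
    exact had_mul_had_le hA hB hB hA i j
  have h2 : sRad ((A * B) ⊙ (B * A)) ≤ sRad (A * B) * sRad (A * B) := by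
    calc sRad ((A * B) ⊙ (B * A)) ≤ sRad (A * B) * sRad (B * A) := sRad_had_le hAB hBA
      _ = sRad (A * B) * sRad (A * B) := by rw [sRad_mul_comm B A]
  rw [specRad_eq, specRad_eq, specRad_eq]
  set x := sRad (A ⊙ B) with hx
  set y := sRad ((A * B) ⊙ (B * A)) with hy
  set z := sRad (A * B) with hzdef
  have hxt := sRad_ne_top (A ⊙ B)
  have hyt := sRad_ne_top ((A * B) ⊙ (B * A))
  have hzt := sRad_ne_top (A * B)
  have hr1 : x.toReal * x.toReal ≤ y.toReal := by
    rw [← ENNReal.toReal_mul]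
    exact ENNReal.toReal_mono hyt h1
  have hr2 : y.toReal ≤ z.toReal * z.toReal := by
    rw [← ENNReal.toReal_mul]
    exact ENNReal.toReal_mono (ENNReal.mul_ne_top hzt hzt) h2
  have hy0 : (0:ℝ) ≤ y.toReal := ENNReal.toReal_nonneg
  have hx0 : (0:ℝ) ≤ x.toReal := ENNReal.toReal_nonneg
  have hz0 : (0:ℝ) ≤ z.toReal := ENNReal.toReal_nonneg
  rw [← Real.sqrt_eq_rpow]
  constructor
  · rw [Real.le_sqrt hx0 hy0]
    nlinarith
  · calc Real.sqrt y.toReal ≤ Real.sqrt (z.toReal * z.toReal) := Real.sqrt_le_sqrt hr2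
      _ = z.toReal := by rw [Real.sqrt_mul_self hz0]
end

section
/- For nonnegative n×n real matrices A₁, …, A_m, the spectral radius of the Hadamard product satisfies ρ(A₁ ∘ A₂ ∘ ⋯ ∘ A_m) ≤ ρ(A₁A₂⋯A_m). -/
open Matrix Filter
open Fin.NatCast

set_option linter.unusedSectionVars false
set_option maxHeartbeats 1000000

attribute [local instance] Matrix.linftyOpNormedRing Matrix.linftyOpNormedAlgebra

namespace SpecAux

variable {N : Type*} [Fintype N] [DecidableEq N]

def Nonneg (A : Matrix N N ℝ) : Prop := ∀ i j, 0 ≤ A i j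

noncomputable def S (A : Matrix N N ℝ) : ℝ := ∑ i, ∑ j, A i j

lemma S_nonneg {A : Matrix N N ℝ} (hA : Nonneg A) : 0 ≤ S A :=
  Finset.sum_nonneg fun i _ => Finset.sum_nonneg fun j _ => hA i j

lemma entry_le_S {A : Matrix N N ℝ} (hA : Nonneg A) (i j : N) : A i j ≤ S A := by
  calc A i j ≤ ∑ j', A i j' :=
        Finset.single_le_sum (fun j' _ => hA i j') (Finset.mem_univ j)
    _ ≤ S A :=
        Finset.single_le_sum (fun i' _ => Finset.sum_nonneg fun j' _ => hA i' j')
          (Finset.mem_univ i)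

lemma Nonneg.mul {A B : Matrix N N ℝ} (hA : Nonneg A) (hB : Nonneg B) : Nonneg (A * B) :=
  fun i j => Finset.sum_nonneg fun k _ => mul_nonneg (hA i k) (hB k j)

lemma Nonneg.one : Nonneg (1 : Matrix N N ℝ) := fun i j => by
  rw [Matrix.one_apply]; positivity

lemma Nonneg.listProd {L : List (Matrix N N ℝ)} (h : ∀ M ∈ L, Nonneg M) : Nonneg L.prod := by
  induction L with
  | nil => simpa using Nonneg.one
  | cons X L ih =>
      rw [List.prod_cons]
      exact (h X (List.mem_cons_self)).mul (ih fun M hM => h M (List.mem_cons_of_mem _ hM))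

lemma Nonneg.pow {A : Matrix N N ℝ} (hA : Nonneg A) (t : ℕ) : Nonneg (A ^ t) := by
  induction t with
  | zero => simpa using Nonneg.one
  | succ t ih => rw [pow_succ]; exact ih.mul hA

lemma S_mul_le {A B : Matrix N N ℝ} (hA : Nonneg A) (hB : Nonneg B) : S (A * B) ≤ S A * S B := by
  have h1 : S (A * B) = ∑ i, ∑ k, A i k * ∑ j, B k j := by
    unfold S
    simp_rw [Matrix.mul_apply, Finset.mul_sum]
    exact Finset.sum_congr rfl fun i _ => Finset.sum_comm
  rw [h1, S, Finset.sum_mul]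
  refine Finset.sum_le_sum fun i _ => ?_
  rw [Finset.sum_mul]
  refine Finset.sum_le_sum fun k _ => ?_
  refine mul_le_mul_of_nonneg_left ?_ (hA i k)
  exact Finset.single_le_sum (fun k' _ => Finset.sum_nonneg fun j _ => hB k' j)
    (Finset.mem_univ k)

lemma sum_prod_le_prod_sum {γ : Type*} [DecidableEq γ] (s : Finset γ) (hs : s.Nonempty)
    (f : γ → N → ℝ) (hf : ∀ c l, 0 ≤ f c l) :
    ∑ l, ∏ c ∈ s, f c l ≤ ∏ c ∈ s, ∑ l, f c l := by
  obtain ⟨a, ha⟩ := hs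
  calc ∑ l, ∏ c ∈ s, f c l
      = ∑ l, f a l * ∏ c ∈ s.erase a, f c l := by
        exact Finset.sum_congr rfl fun l _ => (Finset.mul_prod_erase s (f · l) ha).symm
    _ ≤ ∑ l, f a l * ∏ c ∈ s.erase a, (∑ l', f c l') := by
        refine Finset.sum_le_sum fun l _ => ?_
        refine mul_le_mul_of_nonneg_left ?_ (hf a l)
        refine Finset.prod_le_prod (fun c _ => hf c l) fun c _ => ?_
        exact Finset.single_le_sum (fun l' _ => hf c l') (Finset.mem_univ l)
    _ = (∑ l, f a l) * ∏ c ∈ s.erase a, (∑ l', f c l') := by rw [← Finset.sum_mul]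
    _ = ∏ c ∈ s, ∑ l, f c l := Finset.mul_prod_erase s (fun c => ∑ l, f c l) ha

/-- Core combinatorial lemma: product of Hadamard products is dominated entrywise by
the Hadamard product of the products. -/
lemma had_list_prod_le {m : ℕ} (hm : 0 < m) (L : List (Fin m → Matrix N N ℝ))
    (hL : ∀ X ∈ L, ∀ c, Nonneg (X c)) (i j : N) :
    (L.map fun X => (Matrix.of fun i j => ∏ c, X c i j)).prod i j
      ≤ ∏ c, (L.map fun X => X c).prod i j := by
  haveI : Nonempty (Fin m) := ⟨⟨0, hm⟩⟩
  induction L generalizing i j with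
  | nil =>
      simp only [List.map_nil, List.prod_nil]
      by_cases h : i = j <;> simp [Matrix.one_apply, h, Finset.prod_const, hm.ne', zero_pow]
  | cons X L ih =>
      have hXc : ∀ c, Nonneg (X c) := hL X (List.mem_cons_self)
      have hLtail : ∀ Y ∈ L, ∀ c, Nonneg (Y c) := fun Y hY => hL Y (List.mem_cons_of_mem _ hY)
      have hTc : ∀ c : Fin m, Nonneg (L.map fun X => X c).prod := fun c =>
        Nonneg.listProd fun M hM => by
          obtain ⟨Y, hY, rfl⟩ := List.mem_map.mp hM
          exact hLtail Y hY c
      simp only [List.map_cons, List.prod_cons, Matrix.mul_apply, Matrix.of_apply]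
      calc ∑ l, (∏ c, X c i l) *
              (L.map fun X => (Matrix.of fun i j => ∏ c, X c i j)).prod l j
          ≤ ∑ l, (∏ c, X c i l) * ∏ c, (L.map fun X => X c).prod l j := by
            refine Finset.sum_le_sum fun l _ => ?_
            refine mul_le_mul_of_nonneg_left (ih hLtail l j) ?_
            exact Finset.prod_nonneg fun c _ => hXc c i l
        _ = ∑ l, ∏ c, (X c i l * (L.map fun X => X c).prod l j) := by
            refine Finset.sum_congr rfl fun l _ => ?_
            rw [Finset.prod_mul_distrib]
        _ ≤ ∏ c, ∑ l, (X c i l * (L.map fun X => X c).prod l j) :=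
            sum_prod_le_prod_sum _ Finset.univ_nonempty _
              (fun c l => mul_nonneg (hXc c i l) (hTc c l j))
        _ = ∏ c, (X c * (L.map fun X => X c).prod) i j := by
            refine Finset.prod_congr rfl fun c _ => ?_
            rw [Matrix.mul_apply]

/-! ### Products of windows of a periodic sequence of matrices -/

noncomputable def W (F : ℕ → Matrix N N ℝ) (a b : ℕ) : Matrix N N ℝ :=
  (List.ofFn fun s : Fin b => F (a + s)).prod

lemma W_nonneg {F : ℕ → Matrix N N ℝ} (hF : ∀ n, Nonneg (F n)) (a b : ℕ) :
    Nonneg (W F a b) :=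
  Nonneg.listProd fun M hM => by
    obtain ⟨s, rfl⟩ := List.mem_ofFn.mp hM
    exact hF _

lemma W_add (F : ℕ → Matrix N N ℝ) (a x y : ℕ) :
    W F a (x + y) = W F a x * W F (a + x) y := by
  have e1 : (fun i : Fin x => F (a + ↑(Fin.castLE (Nat.le_add_right x y) i))) = fun s : Fin x => F (a + ↑s) := by
    funext s; simp
  have e2 : (fun j : Fin y => F (a + ↑(Fin.natAdd x j))) = fun s : Fin y => F ((a + x) + ↑s) := by
    funext s; simp [add_assoc]
  unfold W
  rw [List.ofFn_add, e1, e2, List.prod_append]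

lemma W_zero (F : ℕ → Matrix N N ℝ) (a : ℕ) : W F a 0 = 1 := by
  simp [W]

section Periodic

variable {m : ℕ} {F : ℕ → Matrix N N ℝ} (hF : ∀ n, F (n + m) = F n)
include hF

lemma W_shift (a b : ℕ) : W F (a + m) b = W F a b := by
  have e : (fun s : Fin b => F (a + m + ↑s)) = fun s : Fin b => F (a + ↑s) := by
    funext s; rw [add_right_comm, hF]
  unfold W
  rw [e]

lemma W_shift_mul (k a b : ℕ) : W F (a + k * m) b = W F a b := by
  induction k with
  | zero => simp
  | succ k ih =>
      have : a + (k + 1) * m = (a + k * m) + m := by ring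
      rw [this, W_shift hF, ih]

lemma W_pow (t : ℕ) : W F 0 (m * t) = (W F 0 m) ^ t := by
  induction t with
  | zero => simp [W_zero]
  | succ t ih =>
      have h : m * (t + 1) = m + m * t := by ring
      rw [h, W_add, W_shift hF, ih, pow_succ']

lemma W_decomp {c t : ℕ} (hc : c < m) (ht : 1 ≤ t) :
    W F c (m * t) = W F c (m - c) * (W F 0 m) ^ (t - 1) * W F 0 c := by
  obtain ⟨t', rfl⟩ : ∃ t', t = t' + 1 := ⟨t - 1, by omega⟩
  have hmul : m * (t' + 1) = m * t' + m := Nat.mul_succ m t'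
  have h1 : m * (t' + 1) = (m - c) + (m * t' + c) := by omega
  have h2 : c + (m - c) = 0 + 1 * m := by omega
  have h3 : c + (m - c) + m * t' = 0 + (1 + t') * m := by
    have h4 : (1 + t') * m = m + t' * m := by ring
    have h5 : m * t' = t' * m := Nat.mul_comm m t'
    omega
  rw [h1, W_add, W_add, h3, h2, W_shift_mul hF, W_shift_mul hF, W_pow hF,
    Nat.add_sub_cancel, mul_assoc]

end Periodic

/-! ### Norm comparisons -/

lemma row_sum_eq {A : Matrix N N ℝ} (hA : Nonneg A) (i : N) :
    ((∑ j, ‖(A.map Complex.ofReal) i j‖₊ : NNReal) : ℝ) = ∑ j, A i j := by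
  push_cast
  refine Finset.sum_congr rfl fun j _ => ?_
  rw [Matrix.map_apply, Complex.norm_real, Real.norm_of_nonneg (hA i j)]

lemma norm_map_le_S {A : Matrix N N ℝ} (hA : Nonneg A) : ‖A.map Complex.ofReal‖ ≤ S A := by
  rw [Matrix.linfty_opNorm_def, ← Real.coe_toNNReal (S A) (S_nonneg hA)]
  rw [NNReal.coe_le_coe]
  refine Finset.sup_le fun i _ => ?_
  rw [← NNReal.coe_le_coe, row_sum_eq hA i, Real.coe_toNNReal _ (S_nonneg hA)]
  exact Finset.single_le_sum (fun i' _ => Finset.sum_nonneg fun j _ => hA i' j)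
    (Finset.mem_univ i)

lemma S_le_card_norm {A : Matrix N N ℝ} (hA : Nonneg A) :
    S A ≤ (Fintype.card N : ℝ) * ‖A.map Complex.ofReal‖ := by
  have hb : ∀ i : N, (∑ j, A i j) ≤ ‖A.map Complex.ofReal‖ := fun i => by
    rw [Matrix.linfty_opNorm_def, ← row_sum_eq hA i, NNReal.coe_le_coe]
    exact Finset.le_sup (f := fun i => ∑ j, ‖(A.map Complex.ofReal) i j‖₊) (Finset.mem_univ i)
  calc S A = ∑ i, ∑ j, A i j := rfl
    _ ≤ ∑ _i : N, ‖A.map Complex.ofReal‖ := Finset.sum_le_sum fun i _ => hb i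
    _ = (Fintype.card N : ℝ) * ‖A.map Complex.ofReal‖ := by
        rw [Finset.sum_const, Finset.card_univ, nsmul_eq_mul]

lemma map_pow_comm (A : Matrix N N ℝ) (k : ℕ) :
    (A.map Complex.ofReal) ^ k = (A ^ k).map Complex.ofReal := by
  have hco : (Complex.ofReal : ℝ → ℂ) = ⇑Complex.ofRealHom := rfl
  have h := map_pow (Complex.ofRealHom.mapMatrix (m := N)) A k
  simp only [RingHom.mapMatrix_apply] at h
  rw [hco, h]

lemma specRad_empty [IsEmpty N] (A : Matrix N N ℝ) : specRad A = 0 := by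
  haveI : Subsingleton (Matrix N N ℂ) := ⟨fun a b => Matrix.ext fun i _ => isEmptyElim i⟩
  have h : spectrum ℂ (A.map Complex.ofReal) = ∅ :=
    Set.eq_empty_of_forall_notMem fun z hz => hz (isUnit_of_subsingleton _)
  unfold specRad spectralRadius
  rw [h]
  simp

end SpecAux


open SpecAux in
theorem stmt1 {m : ℕ} (hm : 0 < m) {N : Type*} [Fintype N] [DecidableEq N]
    (A : Fin m → Matrix N N ℝ) (hA : ∀ k, ∀ i j, 0 ≤ A k i j) :
    specRad (fun i j => ∏ k, A k i j) ≤ specRad (List.ofFn A).prod := by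
  classical
  cases isEmpty_or_nonempty N with
  | inl hN =>
      rw [specRad_empty]; exact (specRad_empty _).le
  | inr hN =>
  haveI : NeZero m := ⟨hm.ne'⟩
  haveI : Nonempty (Fin m) := ⟨⟨0, hm⟩⟩
  haveI : CompleteSpace (Matrix N N ℂ) :=
    FiniteDimensional.complete ℂ (Matrix N N ℂ)
  set H : Matrix N N ℝ := Matrix.of fun i j => ∏ k, A k i j with hHdef
  set P : Matrix N N ℝ := (List.ofFn A).prod with hPdef
  show specRad H ≤ specRad P
  set F : ℕ → Matrix N N ℝ := fun n => A ((n : Fin m)) with hFdef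
  have hFper : ∀ n, F (n + m) = F n := fun n => by
    simp only [hFdef]
    congr 1
    push_cast
    simp [Fin.natCast_self]
  have hFnn : ∀ n, Nonneg (F n) := fun n => hA _
  have hHnn : Nonneg H := fun i j => by
    simp only [hHdef, Matrix.of_apply]
    exact Finset.prod_nonneg fun k _ => hA k i j
  have hPnn : Nonneg P := Nonneg.listProd fun M hM => by
    obtain ⟨s, rfl⟩ := List.mem_ofFn.mp hM
    exact hA s
  have hPF : W F 0 m = P := by
    have e : (fun s : Fin m => F (0 + ↑s)) = A := by
      funext s
      simp only [hFdef, Nat.zero_add]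
      rw [Fin.cast_val_eq_self]
    rw [hPdef]
    show (List.ofFn fun s : Fin m => F (0 + ↑s)).prod = (List.ofFn A).prod
    rw [e]
  -- key entrywise inequality
  have key : ∀ t : ℕ, ∀ i j, (H ^ (m * t)) i j ≤ ∏ c : Fin m, W F (c : ℕ) (m * t) i j := by
    intro t i j
    have hnn : ∀ X ∈ (List.ofFn fun s : Fin (m * t) => fun c : Fin m => F ((c : ℕ) + (s : ℕ))),
        ∀ c, Nonneg (X c) := by
      intro X hX c
      obtain ⟨s, rfl⟩ := List.mem_ofFn.mp hX
      exact hFnn _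
    have hmain := had_list_prod_le hm
      (List.ofFn fun s : Fin (m * t) => fun c : Fin m => F ((c : ℕ) + (s : ℕ))) hnn i j
    have hL : ((List.ofFn fun s : Fin (m * t) => fun c : Fin m => F ((c : ℕ) + (s : ℕ))).map
        fun X => (Matrix.of fun i j => ∏ c, X c i j)).prod = H ^ (m * t) := by
      rw [List.map_ofFn]
      have hfun : ((fun X : Fin m → Matrix N N ℝ => (Matrix.of fun i j => ∏ c, X c i j)) ∘
          (fun s : Fin (m * t) => fun c : Fin m => F ((c : ℕ) + (s : ℕ))))
          = fun _ : Fin (m * t) => H := by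
        funext s
        show (Matrix.of fun i j => ∏ c : Fin m, F ((c : ℕ) + (s : ℕ)) i j) = H
        rw [hHdef]
        congr 1
        funext i j
        have e1 : ∀ c : Fin m, F ((c : ℕ) + (s : ℕ)) = A (c + ((s : ℕ) : Fin m)) := by
          intro c
          simp only [hFdef]
          congr 1
          push_cast
          rfl
        simp_rw [e1]
        exact Equiv.prod_comp (Equiv.addRight (((s : ℕ) : Fin m))) (fun k => A k i j)
      rw [hfun, List.ofFn_const, List.prod_replicate]
    have hR : ∀ c : Fin m, ((List.ofFn fun s : Fin (m * t) =>
        fun c : Fin m => F ((c : ℕ) + (s : ℕ))).map fun X => X c).prod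
        = W F (c : ℕ) (m * t) := by
      intro c
      rw [List.map_ofFn]
      rfl
    rw [hL] at hmain
    refine hmain.trans ?_
    refine le_of_eq (Finset.prod_congr rfl fun c _ => ?_)
    rw [hR c]
  -- the constant D
  set D : ℝ := ∏ c : Fin m, (S (W F (c : ℕ) (m - (c : ℕ))) * S (W F 0 (c : ℕ))) with hDdef
  have hDnn : 0 ≤ D := Finset.prod_nonneg fun c _ =>
    mul_nonneg (S_nonneg (W_nonneg hFnn _ _)) (S_nonneg (W_nonneg hFnn _ _))
  -- main S bound
  have hSbound : ∀ t : ℕ, 1 ≤ t →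
      S (H ^ (m * t)) ≤ (Fintype.card N : ℝ) ^ 2 * D * S (P ^ (t - 1)) ^ m := by
    intro t ht
    have hWnn : ∀ (a b : ℕ), Nonneg (W F a b) := W_nonneg hFnn
    have step1 : S (H ^ (m * t)) ≤
        (Fintype.card N : ℝ) ^ 2 * ∏ c : Fin m, S (W F (c : ℕ) (m * t)) := by
      have hentry : ∀ i j, (H ^ (m * t)) i j ≤ ∏ c : Fin m, S (W F (c : ℕ) (m * t)) := by
        intro i j
        refine (key t i j).trans ?_
        exact Finset.prod_le_prod (fun c _ => hWnn _ _ i j)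
          (fun c _ => entry_le_S (hWnn _ _) i j)
      calc S (H ^ (m * t)) ≤ ∑ _i : N, ∑ _j : N, ∏ c : Fin m, S (W F (c : ℕ) (m * t)) :=
            Finset.sum_le_sum fun i _ => Finset.sum_le_sum fun j _ => hentry i j
        _ = (Fintype.card N : ℝ) ^ 2 * ∏ c : Fin m, S (W F (c : ℕ) (m * t)) := by
            rw [Finset.sum_const, Finset.sum_const, Finset.card_univ, nsmul_eq_mul,
              nsmul_eq_mul]
            ring
    have step2 : ∀ c : Fin m, S (W F (c : ℕ) (m * t)) ≤
        S (W F (c : ℕ) (m - (c : ℕ))) * S (P ^ (t - 1)) * S (W F 0 (c : ℕ)) := by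
      intro c
      rw [W_decomp hFper c.isLt ht, hPF]
      calc S (W F (c : ℕ) (m - (c : ℕ)) * P ^ (t - 1) * W F 0 (c : ℕ))
          ≤ S (W F (c : ℕ) (m - (c : ℕ)) * P ^ (t - 1)) * S (W F 0 (c : ℕ)) :=
            S_mul_le ((hWnn _ _).mul (hPnn.pow _)) (hWnn _ _)
        _ ≤ S (W F (c : ℕ) (m - (c : ℕ))) * S (P ^ (t - 1)) * S (W F 0 (c : ℕ)) := by
            refine mul_le_mul_of_nonneg_right ?_ (S_nonneg (hWnn _ _))
            exact S_mul_le (hWnn _ _) (hPnn.pow _)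
    have halg : (∏ c : Fin m, (S (W F (c : ℕ) (m - (c : ℕ))) * S (P ^ (t - 1)) *
        S (W F 0 (c : ℕ)))) = D * S (P ^ (t - 1)) ^ m := by
      simp_rw [mul_right_comm _ (S (P ^ (t - 1))) _]
      rw [Finset.prod_mul_distrib, Finset.prod_const, Finset.card_univ, Fintype.card_fin]
    calc S (H ^ (m * t)) ≤ (Fintype.card N : ℝ) ^ 2 * ∏ c : Fin m, S (W F (c : ℕ) (m * t)) :=
          step1
      _ ≤ (Fintype.card N : ℝ) ^ 2 * ∏ c : Fin m, (S (W F (c : ℕ) (m - (c : ℕ))) *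
            S (P ^ (t - 1)) * S (W F 0 (c : ℕ))) := by
          refine mul_le_mul_of_nonneg_left ?_ (by positivity)
          exact Finset.prod_le_prod (fun c _ => S_nonneg (hWnn _ _)) (fun c _ => step2 c)
      _ = (Fintype.card N : ℝ) ^ 2 * D * S (P ^ (t - 1)) ^ m := by rw [halg, mul_assoc]
  -- pass to complex matrices and Gelfand
  set H' : Matrix N N ℂ := H.map Complex.ofReal with hH'def
  set P' : Matrix N N ℂ := P.map Complex.ofReal with hP'def
  have hρH_top : spectralRadius ℂ H' ≠ ⊤ :=
    ((spectrum.spectralRadius_le_nnnorm (𝕜 := ℂ) H').trans_lt ENNReal.coe_lt_top).ne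
  have hρP_top : spectralRadius ℂ P' ≠ ⊤ :=
    ((spectrum.spectralRadius_le_nnnorm (𝕜 := ℂ) P').trans_lt ENNReal.coe_lt_top).ne
  have hHlim : Filter.Tendsto (fun n : ℕ => ‖H' ^ n‖ ^ (1 / (n : ℝ))) Filter.atTop
      (nhds (specRad H)) := by
    have h := (ENNReal.tendsto_toReal hρH_top).comp
      (spectrum.pow_norm_pow_one_div_tendsto_nhds_spectralRadius H')
    refine h.congr fun n => ?_
    exact ENNReal.toReal_ofReal (Real.rpow_nonneg (norm_nonneg _) _)
  have hPlim : Filter.Tendsto (fun n : ℕ => ‖P' ^ n‖ ^ (1 / (n : ℝ))) Filter.atTop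
      (nhds (specRad P)) := by
    have h := (ENNReal.tendsto_toReal hρP_top).comp
      (spectrum.pow_norm_pow_one_div_tendsto_nhds_spectralRadius P')
    refine h.congr fun n => ?_
    exact ENNReal.toReal_ofReal (Real.rpow_nonneg (norm_nonneg _) _)
  -- it suffices to show specRad H ≤ c for all c > specRad P
  have hclaim : ∀ c : ℝ, specRad P < c → specRad H ≤ c := by
    intro c hpc
    have hc0 : 0 < c := lt_of_le_of_lt ENNReal.toReal_nonneg hpc
    obtain ⟨T, hT1, hTlt⟩ : ∃ T : ℕ, 1 ≤ T ∧ ‖P' ^ T‖ ^ (1 / (T : ℝ)) < c := by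
      have hev := (hPlim.eventually_lt_const hpc).and (Filter.eventually_ge_atTop 1)
      obtain ⟨T, h1, h2⟩ := hev.exists
      exact ⟨T, h2, h1⟩
    have hTne : (T : ℝ) ≠ 0 := Nat.cast_ne_zero.mpr (by omega)
    have hPT : ‖P' ^ T‖ ≤ c ^ T := by
      have h0 : (0 : ℝ) ≤ ‖P' ^ T‖ := norm_nonneg _
      have e1 : (‖P' ^ T‖ ^ (1 / (T : ℝ))) ^ (T : ℝ) = ‖P' ^ T‖ := by
        rw [← Real.rpow_mul h0, one_div, inv_mul_cancel₀ hTne, Real.rpow_one]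
      have e2 : (‖P' ^ T‖ ^ (1 / (T : ℝ))) ^ (T : ℝ) ≤ c ^ (T : ℝ) :=
        Real.rpow_le_rpow (Real.rpow_nonneg h0 _) hTlt.le (Nat.cast_nonneg T)
      rw [e1, Real.rpow_natCast] at e2
      exact e2
    -- subsequence indices
    set φ : ℕ → ℕ := fun q => m * (T * q + 1) with hφdef
    have hφ : Filter.Tendsto φ Filter.atTop Filter.atTop := by
      refine Filter.tendsto_atTop_mono (fun q => ?_) Filter.tendsto_id
      calc q = 1 * q := (one_mul q).symm
        _ ≤ T * q := Nat.mul_le_mul_right q hT1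
        _ ≤ T * q + 1 := Nat.le_succ _
        _ ≤ m * (T * q + 1) := Nat.le_mul_of_pos_left _ hm
    set E : ℝ := max 1 ((Fintype.card N : ℝ) ^ 2 * D * (Fintype.card N : ℝ) ^ m) with hEdef
    have hE1 : (1 : ℝ) ≤ E := le_max_left _ _
    have hE0 : (0 : ℝ) < E := lt_of_lt_of_le one_pos hE1
    have hbound : ∀ q : ℕ, 1 ≤ q → ‖H' ^ (φ q)‖ ≤ E * c ^ (T * q * m) := by
      intro q hq
      have hcard : (0 : ℝ) ≤ (Fintype.card N : ℝ) := Nat.cast_nonneg _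
      have h1 : ‖H' ^ (φ q)‖ ≤ S (H ^ (φ q)) := by
        rw [hH'def, map_pow_comm]
        exact norm_map_le_S (hHnn.pow _)
      have h2 : S (H ^ (φ q)) ≤ (Fintype.card N : ℝ) ^ 2 * D * S (P ^ (T * q)) ^ m := by
        simpa [hφdef, Nat.add_sub_cancel] using hSbound (T * q + 1) (by omega)
      have h3 : S (P ^ (T * q)) ≤ (Fintype.card N : ℝ) * ‖P' ^ (T * q)‖ := by
        rw [hP'def, map_pow_comm]
        exact S_le_card_norm (hPnn.pow _)
      have h4 : ‖P' ^ (T * q)‖ ≤ c ^ (T * q) := by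
        calc ‖P' ^ (T * q)‖ = ‖(P' ^ T) ^ q‖ := by rw [← pow_mul]
          _ ≤ ‖P' ^ T‖ ^ q := norm_pow_le' _ (by omega)
          _ ≤ (c ^ T) ^ q := pow_le_pow_left₀ (norm_nonneg _) hPT q
          _ = c ^ (T * q) := by rw [← pow_mul]
      have h5 : S (P ^ (T * q)) ^ m ≤ ((Fintype.card N : ℝ) * c ^ (T * q)) ^ m := by
        refine pow_le_pow_left₀ (S_nonneg (hPnn.pow _)) ?_ m
        exact h3.trans (mul_le_mul_of_nonneg_left h4 hcard)
      calc ‖H' ^ (φ q)‖ ≤ (Fintype.card N : ℝ) ^ 2 * D * S (P ^ (T * q)) ^ m := h1.trans h2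
        _ ≤ (Fintype.card N : ℝ) ^ 2 * D * ((Fintype.card N : ℝ) * c ^ (T * q)) ^ m :=
            mul_le_mul_of_nonneg_left h5 (mul_nonneg (by positivity) hDnn)
        _ = ((Fintype.card N : ℝ) ^ 2 * D * (Fintype.card N : ℝ) ^ m) * c ^ (T * q * m) := by
            rw [mul_pow, ← pow_mul]; ring
        _ ≤ E * c ^ (T * q * m) :=
            mul_le_mul_of_nonneg_right (le_max_right _ _) (pow_nonneg hc0.le _)
    have honediv : Filter.Tendsto (fun q : ℕ => 1 / (φ q : ℝ)) Filter.atTop (nhds 0) :=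
      tendsto_one_div_atTop_nhds_zero_nat.comp hφ
    have hEtend : Filter.Tendsto (fun q : ℕ => E ^ (1 / (φ q : ℝ))) Filter.atTop (nhds 1) := by
      have h1 : Filter.Tendsto (fun q : ℕ => (1 / (φ q : ℝ)) * Real.log E) Filter.atTop
          (nhds 0) := by
        simpa using honediv.mul_const (Real.log E)
      have h2 := (Real.continuous_exp.tendsto 0).comp h1
      simp only [Function.comp_def, Real.exp_zero] at h2
      refine h2.congr fun q => ?_
      rw [Real.rpow_def_of_pos hE0, mul_comm]
    have hψ : Filter.Tendsto (fun q : ℕ => T * q + 1) Filter.atTop Filter.atTop := by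
      refine Filter.tendsto_atTop_mono (fun q => ?_) Filter.tendsto_id
      calc q = 1 * q := (one_mul q).symm
        _ ≤ T * q := Nat.mul_le_mul_right q hT1
        _ ≤ T * q + 1 := Nat.le_succ _
    have hexp : Filter.Tendsto (fun q : ℕ => ((T * q * m : ℕ) : ℝ) * (1 / (φ q : ℝ)))
        Filter.atTop (nhds 1) := by
      have hid : ∀ q : ℕ, ((T * q * m : ℕ) : ℝ) * (1 / (φ q : ℝ))
          = 1 - 1 / ((T * q + 1 : ℕ) : ℝ) := by
        intro q
        have hm0 : (m : ℝ) ≠ 0 := Nat.cast_ne_zero.mpr hm.ne'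
        have ht0 : ((T * q + 1 : ℕ) : ℝ) ≠ 0 := Nat.cast_ne_zero.mpr (by omega)
        simp only [hφdef]
        push_cast at ht0 ⊢
        field_simp
        ring
      have h1 : Filter.Tendsto (fun q : ℕ => 1 - 1 / ((T * q + 1 : ℕ) : ℝ)) Filter.atTop
          (nhds (1 - 0)) :=
        Filter.Tendsto.const_sub 1 (tendsto_one_div_atTop_nhds_zero_nat.comp hψ)
      rw [sub_zero] at h1
      exact h1.congr fun q => (hid q).symm
    have hctend : Filter.Tendsto
        (fun q : ℕ => c ^ (((T * q * m : ℕ) : ℝ) * (1 / (φ q : ℝ)))) Filter.atTop (nhds c) := by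
      have h1 : Filter.Tendsto (fun q : ℕ => (((T * q * m : ℕ) : ℝ) * (1 / (φ q : ℝ)))
          * Real.log c) Filter.atTop (nhds (Real.log c)) := by
        simpa using hexp.mul_const (Real.log c)
      have h2 := (Real.continuous_exp.tendsto (Real.log c)).comp h1
      simp only [Function.comp_def] at h2
      rw [Real.exp_log hc0] at h2
      refine h2.congr fun q => ?_
      rw [Real.rpow_def_of_pos hc0, mul_comm]
    have hub : Filter.Tendsto (fun q : ℕ => E ^ (1 / (φ q : ℝ)) *
        c ^ (((T * q * m : ℕ) : ℝ) * (1 / (φ q : ℝ)))) Filter.atTop (nhds c) := by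
      have h := hEtend.mul hctend
      rwa [one_mul] at h
    have hcomp : ∀ᶠ q in Filter.atTop, ‖H' ^ (φ q)‖ ^ (1 / (φ q : ℝ)) ≤
        E ^ (1 / (φ q : ℝ)) * c ^ (((T * q * m : ℕ) : ℝ) * (1 / (φ q : ℝ))) := by
      refine Filter.eventually_atTop.mpr ⟨1, fun q hq => ?_⟩
      have h1 : ‖H' ^ (φ q)‖ ^ (1 / (φ q : ℝ)) ≤ (E * c ^ (T * q * m)) ^ (1 / (φ q : ℝ)) :=
        Real.rpow_le_rpow (norm_nonneg _) (hbound q hq) (by positivity)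
      refine h1.trans (le_of_eq ?_)
      rw [Real.mul_rpow hE0.le (pow_nonneg hc0.le _), ← Real.rpow_natCast c (T * q * m),
        ← Real.rpow_mul hc0.le]
    exact le_of_tendsto_of_tendsto (hHlim.comp hφ) hub hcomp
  by_contra hcon
  push_neg at hcon
  have := hclaim ((specRad P + specRad H) / 2) (by linarith)
  linarith
end

section
/- Let A and B be nonnegative n×n real matrices and α ∈ [0,1]. Then the entrywise weighted geometric mean satisfies ρ(A^{(α)} ∘ B^{(1-α)}) ≤ ρ(A)^α ρ(B)^{1-α}, where A^{(α)} denotes the matrix with entries a_{ij}^α (with 0^0 = 1). -/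
open Matrix Filter Topology

attribute [local instance] Matrix.linftyOpNormedRing Matrix.linftyOpNormedAlgebra

section aux

variable {N : Type*} [Fintype N] [DecidableEq N]

lemma holder_sum {ι : Type*} (s : Finset ι) (x y : ι → ℝ) (hx : ∀ i, 0 ≤ x i)
    (hy : ∀ i, 0 ≤ y i) {a : ℝ} (h0 : 0 < a) (h1 : a < 1) :
    ∑ i ∈ s, x i ^ a * y i ^ (1 - a) ≤ (∑ i ∈ s, x i) ^ a * (∑ i ∈ s, y i) ^ (1 - a) := by
  have h1' : 0 < 1 - a := by linarith
  have hpq : Real.HolderConjugate (1 / a) (1 / (1 - a)) := by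
    rw [Real.holderConjugate_iff]
    constructor
    · rw [lt_div_iff₀ h0]; linarith
    · rw [one_div, one_div, inv_inv, inv_inv]; ring
  have H := Real.inner_le_Lp_mul_Lq_of_nonneg s (f := fun i => x i ^ a)
      (g := fun i => y i ^ (1 - a)) hpq
      (fun i _ => Real.rpow_nonneg (hx i) a) (fun i _ => Real.rpow_nonneg (hy i) (1 - a))
  have e1 : ∀ i, (x i ^ a) ^ (1 / a) = x i := fun i => by
    rw [← Real.rpow_mul (hx i), mul_one_div_cancel h0.ne', Real.rpow_one]
  have e2 : ∀ i, (y i ^ (1 - a)) ^ (1 / (1 - a)) = y i := fun i => by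
    rw [← Real.rpow_mul (hy i), mul_one_div_cancel h1'.ne', Real.rpow_one]
  simp only [e1, e2, one_div_one_div] at H
  exact H

lemma pow_apply_nonneg {M : Matrix N N ℝ} (hM : ∀ i j, 0 ≤ M i j) (n : ℕ) :
    ∀ i j, 0 ≤ (M ^ n) i j := by
  induction n with
  | zero => intro i j; by_cases h : i = j <;> simp [Matrix.one_apply, h]
  | succ n ih =>
    intro i j
    rw [pow_succ, Matrix.mul_apply]
    exact Finset.sum_nonneg fun l _ => mul_nonneg (ih i l) (hM l j)

lemma entry_bound {A B C : Matrix N N ℝ} (hA : ∀ i j, 0 ≤ A i j) (hB : ∀ i j, 0 ≤ B i j)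
    {a : ℝ} (h0 : 0 < a) (h1 : a < 1)
    (hC : ∀ i j, C i j = A i j ^ a * B i j ^ (1 - a)) (n : ℕ) :
    ∀ i j, (C ^ n) i j ≤ ((A ^ n) i j) ^ a * ((B ^ n) i j) ^ (1 - a) := by
  have h1' : 0 < 1 - a := by linarith
  induction n with
  | zero =>
    intro i j
    by_cases h : i = j <;>
      simp [Matrix.one_apply, h, Real.zero_rpow h0.ne', Real.zero_rpow h1'.ne']
  | succ n ih =>
    intro i j
    rw [pow_succ, pow_succ, pow_succ, Matrix.mul_apply, Matrix.mul_apply, Matrix.mul_apply]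
    have step1 : ∑ l, (C ^ n) i l * C l j ≤
        ∑ l, ((A ^ n) i l * A l j) ^ a * ((B ^ n) i l * B l j) ^ (1 - a) := by
      refine Finset.sum_le_sum fun l _ => ?_
      have hCn : 0 ≤ (C ^ n) i l := by
        refine _root_.pow_apply_nonneg (fun i j => ?_) n i l
        rw [hC]
        exact mul_nonneg (Real.rpow_nonneg (hA _ _) _) (Real.rpow_nonneg (hB _ _) _)
      have hClj : 0 ≤ C l j := by
        rw [hC]
        exact mul_nonneg (Real.rpow_nonneg (hA _ _) _) (Real.rpow_nonneg (hB _ _) _)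
      calc (C ^ n) i l * C l j
          ≤ (((A ^ n) i l) ^ a * ((B ^ n) i l) ^ (1 - a)) * C l j :=
            mul_le_mul_of_nonneg_right (ih i l) hClj
        _ = ((A ^ n) i l * A l j) ^ a * ((B ^ n) i l * B l j) ^ (1 - a) := by
            rw [hC, Real.mul_rpow (_root_.pow_apply_nonneg hA n i l) (hA l j),
              Real.mul_rpow (_root_.pow_apply_nonneg hB n i l) (hB l j)]
            ring
    refine step1.trans ?_
    exact holder_sum Finset.univ _ _
      (fun l => mul_nonneg (_root_.pow_apply_nonneg hA n i l) (hA l j))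
      (fun l => mul_nonneg (_root_.pow_apply_nonneg hB n i l) (hB l j)) h0 h1

lemma row_sum_le_norm {M : Matrix N N ℝ} (hM : ∀ i j, 0 ≤ M i j) (i : N) :
    ∑ j, M i j ≤ ‖M‖ := by
  have h1 : (∑ j, ‖M i j‖₊) ≤ ‖M‖₊ := by
    rw [Matrix.linfty_opNNNorm_def]
    exact Finset.le_sup (f := fun i => ∑ j, ‖M i j‖₊) (Finset.mem_univ i)
  calc ∑ j, M i j = ∑ j, ‖M i j‖ := by
        refine Finset.sum_congr rfl fun j _ => (Real.norm_of_nonneg (hM i j)).symm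
    _ = ((∑ j, ‖M i j‖₊ : NNReal) : ℝ) := by push_cast; rfl
    _ ≤ ((‖M‖₊ : NNReal) : ℝ) := by exact_mod_cast h1
    _ = ‖M‖ := coe_nnnorm _

lemma norm_le_of_rows {M : Matrix N N ℝ} {r : ℝ} (hr : 0 ≤ r)
    (h : ∀ i, ∑ j, ‖M i j‖ ≤ r) : ‖M‖ ≤ r := by
  have : ‖M‖₊ ≤ ⟨r, hr⟩ := by
    rw [Matrix.linfty_opNNNorm_def]
    refine Finset.sup_le fun i _ => ?_
    have := h i
    refine NNReal.coe_le_coe.mp (show ((∑ j, ‖M i j‖₊ : NNReal) : ℝ) ≤ r from ?_)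
    push_cast
    simpa using this
  exact this

lemma norm_key {A B C : Matrix N N ℝ} (hA : ∀ i j, 0 ≤ A i j) (hB : ∀ i j, 0 ≤ B i j)
    {a : ℝ} (h0 : 0 < a) (h1 : a < 1)
    (hC : ∀ i j, C i j = A i j ^ a * B i j ^ (1 - a)) (n : ℕ) :
    ‖C ^ n‖ ≤ ‖A ^ n‖ ^ a * ‖B ^ n‖ ^ (1 - a) := by
  have hCn : ∀ i j, 0 ≤ (C ^ n) i j := by
    refine _root_.pow_apply_nonneg (fun i j => ?_) n
    rw [hC]
    exact mul_nonneg (Real.rpow_nonneg (hA _ _) _) (Real.rpow_nonneg (hB _ _) _)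
  refine norm_le_of_rows
    (mul_nonneg (Real.rpow_nonneg (norm_nonneg _) _) (Real.rpow_nonneg (norm_nonneg _) _))
    fun i => ?_
  have hrow : ∑ j, (C ^ n) i j ≤ ‖A ^ n‖ ^ a * ‖B ^ n‖ ^ (1 - a) := by
    calc ∑ j, (C ^ n) i j
        ≤ ∑ j, ((A ^ n) i j) ^ a * ((B ^ n) i j) ^ (1 - a) :=
          Finset.sum_le_sum fun j _ => entry_bound hA hB h0 h1 hC n i j
      _ ≤ (∑ j, (A ^ n) i j) ^ a * (∑ j, (B ^ n) i j) ^ (1 - a) :=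
          holder_sum Finset.univ _ _ (fun j => _root_.pow_apply_nonneg hA n i j)
            (fun j => _root_.pow_apply_nonneg hB n i j) h0 h1
      _ ≤ ‖A ^ n‖ ^ a * ‖B ^ n‖ ^ (1 - a) := by
          have hsA : 0 ≤ ∑ j, (A ^ n) i j :=
            Finset.sum_nonneg fun j _ => _root_.pow_apply_nonneg hA n i j
          have hsB : 0 ≤ ∑ j, (B ^ n) i j :=
            Finset.sum_nonneg fun j _ => _root_.pow_apply_nonneg hB n i j
          exact mul_le_mul
            (Real.rpow_le_rpow hsA (row_sum_le_norm (_root_.pow_apply_nonneg hA n) i) h0.le)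
            (Real.rpow_le_rpow hsB (row_sum_le_norm (_root_.pow_apply_nonneg hB n) i) (by linarith))
            (Real.rpow_nonneg hsB _) (Real.rpow_nonneg (norm_nonneg _) _)
  calc ∑ j, ‖(C ^ n) i j‖ = ∑ j, (C ^ n) i j :=
        Finset.sum_congr rfl fun j _ => Real.norm_of_nonneg (hCn i j)
    _ ≤ _ := hrow

lemma gelfand_real (M : Matrix N N ℝ) :
    Tendsto (fun n : ℕ => ‖M ^ n‖ ^ (1 / n : ℝ)) atTop (𝓝 (specRad M)) := by
  have hmap : ∀ n : ℕ, (M.map Complex.ofReal) ^ n = (M ^ n).map Complex.ofReal := by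
    intro n
    have : M.map Complex.ofReal = (Complex.ofRealHom.mapMatrix : Matrix N N ℝ →+* Matrix N N ℂ) M := rfl
    rw [this, ← map_pow]
    rfl
  have hnorm : ∀ n : ℕ, ‖(M.map Complex.ofReal) ^ n‖₊ = ‖M ^ n‖₊ := by
    intro n
    rw [hmap n, Matrix.linfty_opNNNorm_def, Matrix.linfty_opNNNorm_def]
    congr 1
    funext i
    refine Finset.sum_congr rfl fun j _ => ?_
    simp [Matrix.map_apply]
  have h := spectrum.pow_nnnorm_pow_one_div_tendsto_nhds_spectralRadius (M.map Complex.ofReal)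
  have hb := spectrum.spectralRadius_le_pow_nnnorm_pow_one_div ℂ (M.map Complex.ofReal) 0
  have hfin : spectralRadius ℂ (M.map Complex.ofReal) ≠ ⊤ :=
    ne_top_of_le_ne_top (ENNReal.mul_ne_top
      (ENNReal.rpow_ne_top_of_nonneg (by norm_num) ENNReal.coe_ne_top)
      (ENNReal.rpow_ne_top_of_nonneg (by norm_num) ENNReal.coe_ne_top)) hb
  have h2 := (ENNReal.tendsto_toReal hfin).comp h
  refine Filter.Tendsto.congr (f₁ := ENNReal.toReal ∘
      fun n : ℕ => (‖(M.map Complex.ofReal) ^ n‖₊ : ENNReal) ^ (1 / n : ℝ)) (fun n => ?_) h2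
  show (((‖(M.map Complex.ofReal) ^ n‖₊ : ENNReal)) ^ (1 / n : ℝ)).toReal = ‖M ^ n‖ ^ (1 / n : ℝ)
  rw [hnorm n, ← ENNReal.toReal_rpow]
  simp

end aux

theorem stmt2 {N : Type*} [Fintype N] [DecidableEq N] (A B : Matrix N N ℝ)
    (hA : ∀ i j, 0 ≤ A i j) (hB : ∀ i j, 0 ≤ B i j) (α : ℝ) (hα : α ∈ Set.Icc (0:ℝ) 1) :
    specRad (hadPow A α ⊙ hadPow B (1 - α)) ≤ specRad A ^ α * specRad B ^ (1 - α) := by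
  obtain ⟨hα0, hα1⟩ := hα
  rcases eq_or_lt_of_le hα0 with h0 | h0
  · -- α = 0
    have hCB : hadPow A α ⊙ hadPow B (1 - α) = B := by
      ext i j
      simp [Matrix.hadamard_apply, hadPow, ← h0, Real.rpow_zero, Real.rpow_one]
    rw [hCB, ← h0]
    simp
  rcases eq_or_lt_of_le hα1 with h1 | h1
  · -- α = 1
    have hCA : hadPow A α ⊙ hadPow B (1 - α) = A := by
      ext i j
      simp [Matrix.hadamard_apply, hadPow, h1, Real.rpow_zero, Real.rpow_one]
    rw [hCA, h1]
    simp
  -- 0 < α < 1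
  set C := hadPow A α ⊙ hadPow B (1 - α) with hCdef
  have hC : ∀ i j, C i j = A i j ^ α * B i j ^ (1 - α) := fun i j => rfl
  have key : ∀ n : ℕ, ‖C ^ n‖ ^ (1 / n : ℝ) ≤
      (‖A ^ n‖ ^ (1 / n : ℝ)) ^ α * (‖B ^ n‖ ^ (1 / n : ℝ)) ^ (1 - α) := by
    intro n
    rcases Nat.eq_zero_or_pos n with hn | hn
    · subst hn
      simp
    · have h := norm_key hA hB h0 h1 hC n
      have h2 := Real.rpow_le_rpow (norm_nonneg _) h (by positivity : (0:ℝ) ≤ 1 / n)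
      refine h2.trans_eq ?_
      rw [Real.mul_rpow (Real.rpow_nonneg (norm_nonneg _) _) (Real.rpow_nonneg (norm_nonneg _) _),
        ← Real.rpow_mul (norm_nonneg _), ← Real.rpow_mul (norm_nonneg _),
        ← Real.rpow_mul (norm_nonneg _), ← Real.rpow_mul (norm_nonneg _), mul_comm α (1 / n : ℝ),
        mul_comm (1 - α) (1 / n : ℝ)]
  have hCl := gelfand_real C
  have hAl := (gelfand_real A).rpow_const (Or.inr hα0)
  have hBl := (gelfand_real B).rpow_const (Or.inr (by linarith : (0:ℝ) ≤ 1 - α))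
  exact le_of_tendsto_of_tendsto' hCl (hAl.mul hBl) key
end

section
/- Let A₁, …, A_m be nonnegative n×n real matrices and α₁, …, α_m > 0 with α₁ + ⋯ + α_m = 1. Then ρ(A₁^{(α₁)} ∘ A₂^{(α₂)} ∘ ⋯ ∘ A_m^{(α_m)}) ≤ ρ(A₁)^{α₁} ρ(A₂)^{α₂} ⋯ ρ(A_m)^{α_m}. -/
open Matrix

/-- Hadamard weighted geometric mean `A₁^{(α₁)} ∘ ⋯ ∘ A_m^{(α_m)}`. -/
noncomputable def hadGeo {m : ℕ} {N : Type*} (A : Fin m → Matrix N N ℝ) (α : Fin m → ℝ) :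
    Matrix N N ℝ :=
  fun i j => ∏ k, (A k i j) ^ (α k)

section Aux

open Finset


/-- Generalized Hölder / weighted power-mean inequality over a finset. -/
lemma my_holder {ι κ : Type*} (s : Finset ι) (t : Finset κ) (w : κ → ℝ) (f : κ → ι → ℝ)
    (hw : ∀ k ∈ t, 0 < w k) (hf : ∀ k i, 0 ≤ f k i) (hw' : ∑ k ∈ t, w k = 1) :
    ∑ i ∈ s, ∏ k ∈ t, f k i ^ w k ≤ ∏ k ∈ t, (∑ i ∈ s, f k i) ^ w k := by
  by_cases hz : ∃ k ∈ t, ∑ i ∈ s, f k i = 0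
  · obtain ⟨k0, hk0, hS⟩ := hz
    have hf0 : ∀ i ∈ s, f k0 i = 0 :=
      (Finset.sum_eq_zero_iff_of_nonneg (fun j _ => hf k0 j)).mp hS
    have hL : ∑ i ∈ s, ∏ k ∈ t, f k i ^ w k = 0 := by
      refine Finset.sum_eq_zero fun i hi => Finset.prod_eq_zero hk0 ?_
      rw [hf0 i hi, Real.zero_rpow (hw k0 hk0).ne']
    have hR : ∏ k ∈ t, (∑ i ∈ s, f k i) ^ w k = 0 := by
      refine Finset.prod_eq_zero hk0 ?_
      rw [hS, Real.zero_rpow (hw k0 hk0).ne']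
    rw [hL, hR]
  · push_neg at hz
    have hS : ∀ k ∈ t, 0 < ∑ i ∈ s, f k i := fun k hk =>
      (Finset.sum_nonneg fun i _ => hf k i).lt_of_ne' (hz k hk)
    have key : ∀ i ∈ s, ∏ k ∈ t, f k i ^ w k =
        (∏ k ∈ t, (∑ j ∈ s, f k j) ^ w k) * ∏ k ∈ t, (f k i / ∑ j ∈ s, f k j) ^ w k := by
      intro i _
      rw [← Finset.prod_mul_distrib]
      refine Finset.prod_congr rfl fun k hk => ?_
      rw [← Real.mul_rpow (hS k hk).le (div_nonneg (hf k i) (hS k hk).le), mul_comm,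
        div_mul_cancel₀ _ (hS k hk).ne']
    calc ∑ i ∈ s, ∏ k ∈ t, f k i ^ w k
        = (∏ k ∈ t, (∑ j ∈ s, f k j) ^ w k) *
            ∑ i ∈ s, ∏ k ∈ t, (f k i / ∑ j ∈ s, f k j) ^ w k := by
          rw [Finset.mul_sum]; exact Finset.sum_congr rfl key
      _ ≤ (∏ k ∈ t, (∑ j ∈ s, f k j) ^ w k) * 1 := by
          refine mul_le_mul_of_nonneg_left ?_
            (Finset.prod_nonneg fun k hk => Real.rpow_nonneg (hS k hk).le _)
          calc ∑ i ∈ s, ∏ k ∈ t, (f k i / ∑ j ∈ s, f k j) ^ w k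
              ≤ ∑ i ∈ s, ∑ k ∈ t, w k * (f k i / ∑ j ∈ s, f k j) :=
                Finset.sum_le_sum fun i _ =>
                  Real.geom_mean_le_arith_mean_weighted t w _ (fun k hk => (hw k hk).le) hw'
                    (fun k hk => div_nonneg (hf k i) (hS k hk).le)
            _ = ∑ k ∈ t, w k * ((∑ i ∈ s, f k i) / ∑ j ∈ s, f k j) := by
                rw [Finset.sum_comm]
                exact Finset.sum_congr rfl fun k _ => by rw [← Finset.mul_sum, ← Finset.sum_div]
            _ = 1 := by
                rw [← hw']
                exact Finset.sum_congr rfl fun k hk => by rw [div_self (hS k hk).ne', mul_one]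
      _ = _ := mul_one _

lemma pow_entry_nonneg {N : Type*} [Fintype N] [DecidableEq N] {M : Matrix N N ℝ}
    (h : ∀ i j, 0 ≤ M i j) : ∀ (p : ℕ) (i j : N), 0 ≤ (M ^ p) i j := by
  intro p
  induction p with
  | zero =>
    intro i j
    rw [pow_zero]
    by_cases hij : i = j <;> simp [Matrix.one_apply, hij]
  | succ p ih =>
    intro i j
    rw [pow_succ, Matrix.mul_apply]
    exact Finset.sum_nonneg fun l _ => mul_nonneg (ih i l) (h l j)

lemma hadGeo_pow_le {m : ℕ} {N : Type*} [Fintype N] [DecidableEq N]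
    (A : Fin m → Matrix N N ℝ) (hA : ∀ k, ∀ i j, 0 ≤ A k i j)
    (α : Fin m → ℝ) (hα : ∀ k, 0 < α k) (hsum : ∑ k, α k = 1) :
    ∀ (p : ℕ) (i j : N), (hadGeo A α ^ p) i j ≤ ∏ k, ((A k ^ p) i j) ^ α k := by
  intro p
  induction p with
  | zero =>
    intro i j
    by_cases hij : i = j
    · subst hij
      simp [Matrix.one_apply_eq, Real.one_rpow]
    · rw [pow_zero, Matrix.one_apply_ne hij]
      refine Finset.prod_nonneg fun k _ => Real.rpow_nonneg ?_ _
      rw [pow_zero]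
      exact le_of_eq (Matrix.one_apply_ne hij).symm
  | succ p ih =>
    intro i j
    rw [pow_succ, Matrix.mul_apply]
    have step1 : ∀ l, (hadGeo A α ^ p) i l * hadGeo A α l j
        ≤ ∏ k, ((A k ^ p) i l * A k l j) ^ α k := by
      intro l
      have h1 : (hadGeo A α ^ p) i l * hadGeo A α l j
          ≤ (∏ k, ((A k ^ p) i l) ^ α k) * ∏ k, (A k l j) ^ α k := by
        refine mul_le_mul (ih i l) (le_refl _)
          (Finset.prod_nonneg fun k _ => Real.rpow_nonneg (hA k l j) _)
          (Finset.prod_nonneg fun k _ => Real.rpow_nonneg (pow_entry_nonneg (hA k) p i l) _)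
      refine h1.trans (le_of_eq ?_)
      rw [← Finset.prod_mul_distrib]
      exact Finset.prod_congr rfl fun k _ =>
        (Real.mul_rpow (pow_entry_nonneg (hA k) p i l) (hA k l j)).symm
    calc ∑ l, (hadGeo A α ^ p) i l * hadGeo A α l j
        ≤ ∑ l, ∏ k, ((A k ^ p) i l * A k l j) ^ α k := Finset.sum_le_sum fun l _ => step1 l
      _ ≤ ∏ k, (∑ l, (A k ^ p) i l * A k l j) ^ α k :=
          my_holder Finset.univ Finset.univ α (fun k l => (A k ^ p) i l * A k l j)
            (fun k _ => hα k)
            (fun k l => mul_nonneg (pow_entry_nonneg (hA k) p i l) (hA k l j)) hsum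
      _ = ∏ k, ((A k ^ (p + 1)) i j) ^ α k := by
          refine Finset.prod_congr rfl fun k _ => ?_
          rw [pow_succ, Matrix.mul_apply]


lemma frob_sum_le {m : ℕ} {N : Type*} [Fintype N] [DecidableEq N]
    (A : Fin m → Matrix N N ℝ) (hA : ∀ k, ∀ i j, 0 ≤ A k i j)
    (α : Fin m → ℝ) (hα : ∀ k, 0 < α k) (hsum : ∑ k, α k = 1) (p : ℕ) :
    (∑ x : N × N, ((hadGeo A α ^ p) x.1 x.2) ^ (2:ℝ)) ^ (1/2:ℝ) ≤
      ∏ k, ((∑ x : N × N, ((A k ^ p) x.1 x.2) ^ (2:ℝ)) ^ (1/2:ℝ)) ^ α k := by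
  have hBnn : ∀ i j, 0 ≤ hadGeo A α i j := fun i j =>
    Finset.prod_nonneg fun k _ => Real.rpow_nonneg (hA k i j) _
  have hAnn : ∀ k (x : N × N), (0:ℝ) ≤ ((A k ^ p) x.1 x.2) ^ (2:ℝ) := fun k x =>
    Real.rpow_nonneg (pow_entry_nonneg (hA k) p _ _) _
  have Snn : ∀ k, (0:ℝ) ≤ ∑ x : N × N, ((A k ^ p) x.1 x.2) ^ (2:ℝ) := fun k =>
    Finset.sum_nonneg fun x _ => hAnn k x
  have hterm : ∀ x : N × N,
      ((hadGeo A α ^ p) x.1 x.2) ^ (2:ℝ) ≤ ∏ k, (((A k ^ p) x.1 x.2) ^ (2:ℝ)) ^ α k := by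
    intro x
    have h1 : (hadGeo A α ^ p) x.1 x.2 ≤ ∏ k, ((A k ^ p) x.1 x.2) ^ α k :=
      hadGeo_pow_le A hA α hα hsum p x.1 x.2
    calc ((hadGeo A α ^ p) x.1 x.2) ^ (2:ℝ)
        ≤ (∏ k, ((A k ^ p) x.1 x.2) ^ α k) ^ (2:ℝ) :=
          Real.rpow_le_rpow (pow_entry_nonneg hBnn p x.1 x.2) h1 (by norm_num)
      _ = ∏ k, (((A k ^ p) x.1 x.2) ^ α k) ^ (2:ℝ) :=
          (Real.finset_prod_rpow _ _
            (fun k _ => Real.rpow_nonneg (pow_entry_nonneg (hA k) p _ _) _) _).symm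
      _ = ∏ k, (((A k ^ p) x.1 x.2) ^ (2:ℝ)) ^ α k := by
          refine Finset.prod_congr rfl fun k _ => ?_
          rw [← Real.rpow_mul (pow_entry_nonneg (hA k) p _ _), mul_comm,
            Real.rpow_mul (pow_entry_nonneg (hA k) p _ _)]
  calc (∑ x : N × N, ((hadGeo A α ^ p) x.1 x.2) ^ (2:ℝ)) ^ (1/2:ℝ)
      ≤ (∏ k, (∑ x : N × N, ((A k ^ p) x.1 x.2) ^ (2:ℝ)) ^ α k) ^ (1/2:ℝ) := by
        refine Real.rpow_le_rpow
          (Finset.sum_nonneg fun x _ =>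
            Real.rpow_nonneg (pow_entry_nonneg hBnn p _ _) _) ?_ (by norm_num)
        refine (Finset.sum_le_sum fun x _ => hterm x).trans ?_
        have H := my_holder (ι := N × N) (κ := Fin m) Finset.univ Finset.univ α
          (fun k x => ((A k ^ p) x.1 x.2) ^ (2:ℝ)) (fun k _ => hα k) hAnn hsum
        exact H
    _ = ∏ k, ((∑ x : N × N, ((A k ^ p) x.1 x.2) ^ (2:ℝ)) ^ (1/2:ℝ)) ^ α k := by
        rw [← Real.finset_prod_rpow _ _
          (fun k _ => Real.rpow_nonneg (Snn k) _) _]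
        refine Finset.prod_congr rfl fun k _ => ?_
        rw [← Real.rpow_mul (Snn k), mul_comm, Real.rpow_mul (Snn k)]

end Aux

section main

open Filter Topology
open scoped ENNReal NNReal

attribute [local instance] Matrix.frobeniusNormedAddCommGroup Matrix.frobeniusNormedRing
  Matrix.frobeniusNormedAlgebra

variable {N : Type*} [Fintype N] [DecidableEq N]

lemma map_ofReal_pow (M : Matrix N N ℝ) (q : ℕ) :
    (M.map Complex.ofReal) ^ q = (M ^ q).map Complex.ofReal := by
  have := (map_pow (Complex.ofRealHom.mapMatrix (m := N)) M q).symm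
  exact this

lemma nnnorm_map_ofReal (M : Matrix N N ℝ) (hM : ∀ i j, 0 ≤ M i j) :
    (‖M.map Complex.ofReal‖₊ : ℝ≥0∞) =
      ENNReal.ofReal ((∑ x : N × N, (M x.1 x.2) ^ (2:ℝ)) ^ (1/2 : ℝ)) := by
  rw [← enorm_eq_nnnorm, ← ofReal_norm]
  congr 1
  rw [Matrix.frobenius_norm_def, Fintype.sum_prod_type]
  congr 1
  refine Finset.sum_congr rfl fun i _ => Finset.sum_congr rfl fun j _ => ?_
  rw [Matrix.map_apply, Complex.norm_real, Real.norm_of_nonneg (hM i j)]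

theorem stmt3' {m : ℕ} (hm : 0 < m)
    (A : Fin m → Matrix N N ℝ) (hA : ∀ k, ∀ i j, 0 ≤ A k i j)
    (α : Fin m → ℝ) (hα : ∀ k, 0 < α k) (hsum : ∑ k, α k = 1) :
    specRad (hadGeo A α) ≤ ∏ k, specRad (A k) ^ (α k) := by
  rcases isEmpty_or_nonempty N with hN | hN
  · haveI : Subsingleton (Matrix N N ℂ) := ⟨fun a b => by ext i j; exact isEmptyElim i⟩
    have hz : ∀ M : Matrix N N ℝ, specRad M = 0 := fun M => by
      rw [specRad, spectrum.SpectralRadius.of_subsingleton, ENNReal.toReal_zero]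
    rw [hz]
    exact (Finset.prod_eq_zero (Finset.mem_univ (⟨0, hm⟩ : Fin m))
      (by rw [hz]; exact Real.zero_rpow (hα _).ne')).symm.le
  · haveI : CompleteSpace (Matrix N N ℂ) := FiniteDimensional.complete ℂ _
    set B := hadGeo A α with hB
    have hBnn : ∀ i j, 0 ≤ B i j := fun i j =>
      Finset.prod_nonneg fun k _ => Real.rpow_nonneg (hA k i j) _
    set Bh := B.map Complex.ofReal with hBh
    set Ah : Fin m → Matrix N N ℂ := fun k => (A k).map Complex.ofReal with hAh
    -- the key entrywise/Frobenius estimate, transported to `ℝ≥0∞`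
    have hkey : ∀ q : ℕ, (‖Bh ^ q‖₊ : ℝ≥0∞) ≤ ∏ k, (‖Ah k ^ q‖₊ : ℝ≥0∞) ^ (α k) := by
      intro q
      rw [hBh, map_ofReal_pow B q, nnnorm_map_ofReal _ (pow_entry_nonneg hBnn q)]
      have h2 := frob_sum_le A hA α hα hsum q
      calc ENNReal.ofReal ((∑ x : N × N, ((B ^ q) x.1 x.2) ^ (2:ℝ)) ^ (1/2 : ℝ))
          ≤ ENNReal.ofReal (∏ k, ((∑ x : N × N, ((A k ^ q) x.1 x.2) ^ (2:ℝ)) ^ (1/2:ℝ)) ^ α k) :=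
            ENNReal.ofReal_le_ofReal h2
        _ = ∏ k, (ENNReal.ofReal ((∑ x : N × N, ((A k ^ q) x.1 x.2) ^ (2:ℝ)) ^ (1/2:ℝ))) ^ α k := by
            rw [ENNReal.ofReal_prod_of_nonneg (fun k _ => Real.rpow_nonneg
              (Real.rpow_nonneg (Finset.sum_nonneg fun x _ =>
                Real.rpow_nonneg (pow_entry_nonneg (hA k) q _ _) _) _) _)]
            refine Finset.prod_congr rfl fun k _ => ?_
            rw [ENNReal.ofReal_rpow_of_nonneg (Real.rpow_nonneg (Finset.sum_nonneg fun x _ =>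
              Real.rpow_nonneg (pow_entry_nonneg (hA k) q _ _) _) _) (hα k).le]
        _ = ∏ k, (‖Ah k ^ q‖₊ : ℝ≥0∞) ^ α k := by
            refine Finset.prod_congr rfl fun k _ => ?_
            rw [hAh]
            rw [map_ofReal_pow (A k) q, nnnorm_map_ofReal _ (pow_entry_nonneg (hA k) q)]
    -- finiteness of spectral radii
    have hρ_fin : ∀ M : Matrix N N ℂ, spectralRadius ℂ M ≠ ⊤ := by
      intro M
      have h0 := spectrum.spectralRadius_le_pow_nnnorm_pow_one_div ℂ M 0
      refine ne_top_of_le_ne_top (ENNReal.mul_ne_top ?_ ?_) h0 <;>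
        exact ENNReal.rpow_ne_top_of_nonneg (by norm_num) ENNReal.coe_ne_top
    -- Gelfand limits, in ℝ
    have hG : ∀ k, Tendsto
        (fun n : ℕ => ((‖Ah k ^ (n+1)‖₊ : ℝ≥0∞) ^ (1/((n:ℝ)+1))).toReal)
        atTop (𝓝 (specRad (A k))) := by
      intro k
      have h1 := spectrum.pow_nnnorm_pow_one_div_tendsto_nhds_spectralRadius (Ah k)
      have h2 := h1.comp (tendsto_add_atTop_nat 1)
      have h3 := (ENNReal.tendsto_toReal (hρ_fin (Ah k))).comp h2
      have h4 : specRad (A k) = (spectralRadius ℂ (Ah k)).toReal := rfl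
      rw [h4]
      convert h3 using 2 with n
      simp [Function.comp]
    -- the constant `‖1‖` is nonzero
    have hc0 : ‖(1 : Matrix N N ℂ)‖ ≠ 0 := by
      have h1 : (1 : Matrix N N ℂ) ≠ 0 := by
        intro h
        obtain ⟨i⟩ := hN
        have := congrFun (congrFun h i) i
        simp [Matrix.one_apply_eq, Matrix.zero_apply] at this
      exact norm_ne_zero_iff.mpr h1
    -- the bound for each n
    have hbound : ∀ n : ℕ, specRad B ≤
        (∏ k, ((‖Ah k ^ (n+1)‖₊ : ℝ≥0∞) ^ (1/((n:ℝ)+1))).toReal ^ α k) *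
          ‖(1 : Matrix N N ℂ)‖ ^ (1/((n:ℝ)+1)) := by
      intro n
      have h0 := spectrum.spectralRadius_le_pow_nnnorm_pow_one_div ℂ Bh n
      have he0 : (0:ℝ) ≤ 1/((n:ℝ)+1) := by positivity
      have hU : spectralRadius ℂ Bh ≤
          (∏ k, ((‖Ah k ^ (n+1)‖₊ : ℝ≥0∞) ^ (1/((n:ℝ)+1))) ^ α k) *
            (‖(1 : Matrix N N ℂ)‖₊ : ℝ≥0∞) ^ (1/((n:ℝ)+1)) := by
        refine h0.trans (mul_le_mul_left ?_ _)
        calc (‖Bh ^ (n+1)‖₊ : ℝ≥0∞) ^ (1/((n:ℝ)+1))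
            ≤ (∏ k, (‖Ah k ^ (n+1)‖₊ : ℝ≥0∞) ^ α k) ^ (1/((n:ℝ)+1)) :=
              ENNReal.rpow_le_rpow (hkey (n+1)) he0
          _ = ∏ k, ((‖Ah k ^ (n+1)‖₊ : ℝ≥0∞) ^ (1/((n:ℝ)+1))) ^ α k := by
              rw [← ENNReal.prod_rpow_of_nonneg he0]
              refine Finset.prod_congr rfl fun k _ => ?_
              rw [← ENNReal.rpow_mul, mul_comm, ENNReal.rpow_mul]
      have hUne : (∏ k, ((‖Ah k ^ (n+1)‖₊ : ℝ≥0∞) ^ (1/((n:ℝ)+1))) ^ α k) *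
          (‖(1 : Matrix N N ℂ)‖₊ : ℝ≥0∞) ^ (1/((n:ℝ)+1)) ≠ ⊤ :=
        ENNReal.mul_ne_top
          (ENNReal.prod_ne_top fun k _ => ENNReal.rpow_ne_top_of_nonneg (hα k).le
            (ENNReal.rpow_ne_top_of_nonneg he0 ENNReal.coe_ne_top))
          (ENNReal.rpow_ne_top_of_nonneg he0 ENNReal.coe_ne_top)
      have hmono := ENNReal.toReal_mono hUne hU
      rw [ENNReal.toReal_mul, ENNReal.toReal_prod] at hmono
      have hsB : specRad B = (spectralRadius ℂ Bh).toReal := rfl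
      rw [hsB]
      refine hmono.trans (le_of_eq ?_)
      congr 1
      · exact Finset.prod_congr rfl fun k _ => (ENNReal.toReal_rpow _ _).symm
      · rw [← ENNReal.toReal_rpow, ENNReal.coe_toReal, coe_nnnorm]
    -- pass to the limit
    have hv : Tendsto (fun n : ℕ =>
        (∏ k, ((‖Ah k ^ (n+1)‖₊ : ℝ≥0∞) ^ (1/((n:ℝ)+1))).toReal ^ α k) *
          ‖(1 : Matrix N N ℂ)‖ ^ (1/((n:ℝ)+1))) atTop
        (𝓝 ((∏ k, specRad (A k) ^ α k) * 1)) := by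
      refine Tendsto.mul ?_ ?_
      · exact tendsto_finset_prod _ fun k _ =>
          ((Real.continuous_rpow_const (hα k).le).tendsto _).comp (hG k)
      · have h5 : Tendsto (fun n : ℕ => 1/((n:ℝ)+1)) atTop (𝓝 0) :=
          tendsto_one_div_add_atTop_nhds_zero_nat
        have h6 := (Real.continuousAt_const_rpow hc0).tendsto.comp h5
        simpa [Function.comp_def, Real.rpow_zero] using h6
    have hfinal := ge_of_tendsto' hv hbound
    rw [mul_one] at hfinal
    exact hfinal

end main


theorem stmt3 {m : ℕ} (hm : 0 < m) {N : Type*} [Fintype N] [DecidableEq N]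
    (A : Fin m → Matrix N N ℝ) (hA : ∀ k, ∀ i j, 0 ≤ A k i j)
    (α : Fin m → ℝ) (hα : ∀ k, 0 < α k) (hsum : ∑ k, α k = 1) :
    specRad (hadGeo A α) ≤ ∏ k, specRad (A k) ^ (α k) := by
  exact stmt3' hm A hA α hα hsum
end

section
/- Let A and B be nonnegative n×n real matrices. Then ρ(A^{(1/2)} ∘ B^{(1/2)}) ≤ ρ((AB)^{(1/2)} ∘ (BA)^{(1/2)})^{1/2} ≤ ρ(AB)^{1/2}. -/
open Matrix

namespace SRAux5

open Filter Topology Real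

attribute [local instance] Matrix.linftyOpNormedRing Matrix.linftyOpNormedAlgebra

variable {N : Type*} [Fintype N] [DecidableEq N]

local instance : CompleteSpace (Matrix N N ℂ) :=
  FiniteDimensional.complete ℂ _

noncomputable def S (M : Matrix N N ℝ) : ENNReal := spectralRadius ℂ (M.map Complex.ofReal)

lemma specRad_eq_toReal_S (M : Matrix N N ℝ) : specRad M = (S M).toReal := rfl

lemma nnnorm_map_ofReal (M : Matrix N N ℝ) : ‖M.map Complex.ofReal‖₊ = ‖M‖₊ := by
  simp [Matrix.linfty_opNNNorm_def, Matrix.map_apply]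

/-- Gelfand's formula for real matrices with the `L∞`-operator norm. -/
lemma gelfand (M : Matrix N N ℝ) :
    Tendsto (fun n : ℕ => (‖M ^ n‖₊ : ENNReal) ^ (1 / n : ℝ)) atTop (𝓝 (S M)) := by
  have h := spectrum.pow_nnnorm_pow_one_div_tendsto_nhds_spectralRadius
    (A := Matrix N N ℂ) (M.map Complex.ofReal)
  have he : ∀ n : ℕ, (M.map Complex.ofReal) ^ n = (M ^ n).map Complex.ofReal := by
    intro n
    have := (map_pow (Complex.ofRealHom.mapMatrix) M n).symm
    simp only [RingHom.mapMatrix_apply] at this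
    exact this
  simpa [he, nnnorm_map_ofReal, S] using h

lemma S_ne_top [Nonempty N] (M : Matrix N N ℝ) : S M ≠ ⊤ :=
  (lt_of_le_of_lt (spectrum.spectralRadius_le_nnnorm (M.map Complex.ofReal))
    ENNReal.coe_lt_top).ne

lemma S_mul_comm (A B : Matrix N N ℝ) : S (A * B) = S (B * A) := by
  have key : ∀ x y : Matrix N N ℂ, spectralRadius ℂ (x * y) ≤ spectralRadius ℂ (y * x) := by
    intro x y
    refine iSup₂_le fun k hk => ?_
    rcases eq_or_ne k 0 with rfl | h
    · simp
    · have : k ∈ spectrum ℂ (y * x) \ {0} := by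
        rw [← spectrum.nonzero_mul_comm]; exact ⟨hk, h⟩
      exact le_iSup₂_of_le k this.1 le_rfl
  have hmap : ∀ X Y : Matrix N N ℝ, (X * Y).map Complex.ofReal
      = (X.map Complex.ofReal) * (Y.map Complex.ofReal) := by
    intro X Y
    exact Matrix.map_mul (f := Complex.ofRealHom)
  unfold S
  rw [hmap, hmap]
  exact le_antisymm (key _ _) (key _ _)

lemma entryPow_nonneg {P : Matrix N N ℝ} (hP : ∀ i j, 0 ≤ P i j) (n : ℕ) :
    ∀ i j, 0 ≤ (P ^ n) i j := by
  induction n with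
  | zero => intro i j; rw [pow_zero, Matrix.one_apply]; split <;> norm_num
  | succ n ih =>
    intro i j
    rw [pow_succ, Matrix.mul_apply]
    exact Finset.sum_nonneg fun k _ => mul_nonneg (ih i k) (hP k j)

lemma entryPow_mono {P Q : Matrix N N ℝ} (hP : ∀ i j, 0 ≤ P i j)
    (hQ : ∀ i j, 0 ≤ Q i j) (hPQ : ∀ i j, P i j ≤ Q i j) (n : ℕ) :
    ∀ i j, (P ^ n) i j ≤ (Q ^ n) i j := by
  induction n with
  | zero => intro i j; rw [pow_zero, pow_zero]
  | succ n ih =>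
    intro i j
    rw [pow_succ, pow_succ, Matrix.mul_apply, Matrix.mul_apply]
    exact Finset.sum_le_sum fun k _ =>
      mul_le_mul (ih i k) (hPQ k j) (hP k j) (le_trans (entryPow_nonneg hQ n i k) (le_refl _))

lemma nnnorm_mono {P Q : Matrix N N ℝ} (hP : ∀ i j, 0 ≤ P i j)
    (hPQ : ∀ i j, P i j ≤ Q i j) : ‖P‖₊ ≤ ‖Q‖₊ := by
  rw [Matrix.linfty_opNNNorm_def, Matrix.linfty_opNNNorm_def]
  refine Finset.sup_le fun i hi => le_trans ?_ (Finset.le_sup (f := fun i => ∑ j, ‖Q i j‖₊) hi)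
  refine Finset.sum_le_sum fun j _ => ?_
  have h1 : 0 ≤ Q i j := le_trans (hP i j) (hPQ i j)
  rw [← NNReal.coe_le_coe, coe_nnnorm, coe_nnnorm, Real.norm_of_nonneg (hP i j),
    Real.norm_of_nonneg h1]
  exact hPQ i j

lemma row_sum_le_nnnorm (X : Matrix N N ℝ) (i : N) : ∑ j, ‖X i j‖₊ ≤ ‖X‖₊ := by
  rw [Matrix.linfty_opNNNorm_def]
  exact Finset.le_sup (f := fun i => ∑ j, ‖X i j‖₊) (Finset.mem_univ i)

lemma nnnorm_le_sqrt_mul_sqrt {P X Y : Matrix N N ℝ} (hP0 : ∀ i j, 0 ≤ P i j)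
    (hX : ∀ i j, 0 ≤ X i j) (hY : ∀ i j, 0 ≤ Y i j)
    (hP : ∀ i j, P i j ≤ √(X i j) * √(Y i j)) :
    (‖P‖₊ : ENNReal) ≤ (‖X‖₊ : ENNReal) ^ ((1:ℝ)/2) * (‖Y‖₊ : ENNReal) ^ ((1:ℝ)/2) := by
  have key : ‖P‖₊ ≤ NNReal.sqrt ‖X‖₊ * NNReal.sqrt ‖Y‖₊ := by
    rw [Matrix.linfty_opNNNorm_def]
    refine Finset.sup_le fun i _ => ?_
    rw [← NNReal.coe_le_coe, NNReal.coe_mul, Real.coe_sqrt, Real.coe_sqrt, coe_nnnorm,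
      coe_nnnorm, NNReal.coe_sum]
    calc (∑ j, (‖P i j‖₊ : ℝ)) = ∑ j, P i j := by
          refine Finset.sum_congr rfl fun j _ => ?_
          rw [coe_nnnorm, Real.norm_of_nonneg (hP0 i j)]
      _ ≤ ∑ j, √(X i j) * √(Y i j) := Finset.sum_le_sum fun j _ => hP i j
      _ ≤ √(∑ j, X i j) * √(∑ j, Y i j) :=
          Real.sum_sqrt_mul_sqrt_le _ (fun j => hX i j) (fun j => hY i j)
      _ ≤ √‖X‖ * √‖Y‖ := by
          gcongr
          · have := row_sum_le_nnnorm X i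
            rw [← NNReal.coe_le_coe] at this
            push_cast at this
            refine le_trans (le_of_eq ?_) this
            refine Finset.sum_congr rfl fun j _ => ?_
            rw [Real.norm_of_nonneg (hX i j)]
          · have := row_sum_le_nnnorm Y i
            rw [← NNReal.coe_le_coe] at this
            push_cast at this
            refine le_trans (le_of_eq ?_) this
            refine Finset.sum_congr rfl fun j _ => ?_
            rw [Real.norm_of_nonneg (hY i j)]
  calc (‖P‖₊ : ENNReal) ≤ ((NNReal.sqrt ‖X‖₊ * NNReal.sqrt ‖Y‖₊ : NNReal) : ENNReal) := by
        exact_mod_cast key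
    _ = (‖X‖₊ : ENNReal) ^ ((1:ℝ)/2) * (‖Y‖₊ : ENNReal) ^ ((1:ℝ)/2) := by
        push_cast
        rw [NNReal.sqrt_eq_rpow, NNReal.sqrt_eq_rpow,
          ENNReal.coe_rpow_of_nonneg _ (by norm_num : (0:ℝ) ≤ 1/2),
          ENNReal.coe_rpow_of_nonneg _ (by norm_num : (0:ℝ) ≤ 1/2)]

/-- Entrywise Cauchy–Schwarz for powers of an entrywise geometric mean. -/
lemma pow_sqrtHad_le {E F G : Matrix N N ℝ} (hE : ∀ i j, 0 ≤ E i j)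
    (hF : ∀ i j, 0 ≤ F i j) (hG : ∀ i j, G i j = √(E i j) * √(F i j)) (n : ℕ) :
    ∀ i j, (G ^ n) i j ≤ √((E ^ n) i j) * √((F ^ n) i j) := by
  have hG0 : ∀ i j, 0 ≤ G i j := fun i j => by
    rw [hG]; exact mul_nonneg (Real.sqrt_nonneg _) (Real.sqrt_nonneg _)
  induction n with
  | zero =>
    intro i j
    rw [pow_zero, pow_zero, pow_zero, Matrix.one_apply]
    split <;> simp
  | succ n ih =>
    intro i j
    rw [pow_succ, Matrix.mul_apply]
    calc ∑ k, (G ^ n) i k * G k j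
        ≤ ∑ k, √((E ^ n) i k * E k j) * √((F ^ n) i k * F k j) := by
          refine Finset.sum_le_sum fun k _ => ?_
          rw [Real.sqrt_mul (entryPow_nonneg hE n i k), Real.sqrt_mul (entryPow_nonneg hF n i k)]
          calc (G ^ n) i k * G k j
              ≤ (√((E ^ n) i k) * √((F ^ n) i k)) * (√(E k j) * √(F k j)) := by
                refine mul_le_mul (ih i k) (le_of_eq (hG k j)) (hG0 k j) ?_
                exact mul_nonneg (Real.sqrt_nonneg _) (Real.sqrt_nonneg _)
            _ = √((E ^ n) i k) * √(E k j) * (√((F ^ n) i k) * √(F k j)) := by ring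
      _ ≤ √(∑ k, (E ^ n) i k * E k j) * √(∑ k, (F ^ n) i k * F k j) := by
          refine Real.sum_sqrt_mul_sqrt_le _ (fun k => ?_) (fun k => ?_)
          · exact mul_nonneg (entryPow_nonneg hE n i k) (hE k j)
          · exact mul_nonneg (entryPow_nonneg hF n i k) (hF k j)
      _ = √((E ^ (n+1)) i j) * √((F ^ (n+1)) i j) := by
          rw [pow_succ, pow_succ, Matrix.mul_apply, Matrix.mul_apply]

lemma two_mul_tendsto : Tendsto (fun n : ℕ => 2 * n) atTop atTop := by
  refine tendsto_atTop_mono (fun n => ?_) tendsto_id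
  simp only [id_eq]
  omega

/-- If `M * M ≤ D` entrywise (all nonnegative) then `S M ≤ (S D) ^ (1/2)`. -/
lemma S_le_rpow_half {M D : Matrix N N ℝ} (hM : ∀ i j, 0 ≤ M i j)
    (hD : ∀ i j, 0 ≤ D i j) (h : ∀ i j, (M * M) i j ≤ D i j) :
    S M ≤ (S D) ^ ((1:ℝ)/2) := by
  have hMM : ∀ i j, 0 ≤ (M * M) i j := fun i j => by
    rw [Matrix.mul_apply]
    exact Finset.sum_nonneg fun k _ => mul_nonneg (hM i k) (hM k j)
  have hL : Tendsto (fun n : ℕ => (‖M ^ (2 * n)‖₊ : ENNReal) ^ (1 / (2 * n : ℕ) : ℝ))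
      atTop (𝓝 (S M)) := (gelfand M).comp two_mul_tendsto
  have hR : Tendsto (fun n : ℕ => ((‖D ^ n‖₊ : ENNReal) ^ (1 / n : ℝ)) ^ ((1:ℝ)/2))
      atTop (𝓝 ((S D) ^ ((1:ℝ)/2))) :=
    (ENNReal.continuous_rpow_const.tendsto (S D)).comp (gelfand D)
  refine le_of_tendsto_of_tendsto' hL hR fun n => ?_
  rcases Nat.eq_zero_or_pos n with rfl | hn
  · simp
  · have hnorm : ‖M ^ (2 * n)‖₊ ≤ ‖D ^ n‖₊ := by
      have h2 : M ^ (2 * n) = (M * M) ^ n := by rw [pow_mul, sq]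
      rw [h2]
      exact nnnorm_mono (entryPow_nonneg hMM n) (entryPow_mono hMM hD h n)
    have hexp : (1 / (2 * n : ℕ) : ℝ) = (1 / n : ℝ) * ((1:ℝ)/2) := by
      have hne : (n : ℝ) ≠ 0 := Nat.cast_ne_zero.mpr hn.ne'
      push_cast
      field_simp
    rw [hexp, ENNReal.rpow_mul]
    exact ENNReal.rpow_le_rpow (ENNReal.rpow_le_rpow (by exact_mod_cast hnorm)
      (by positivity)) (by norm_num)

/-- Master inequality: `ρ(E^{1/2} ∘ F^{1/2}) ≤ ρ(E)^{1/2} ρ(F)^{1/2}`. -/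
lemma S_sqrtHad_le [Nonempty N] {E F G : Matrix N N ℝ} (hE : ∀ i j, 0 ≤ E i j)
    (hF : ∀ i j, 0 ≤ F i j) (hG : ∀ i j, G i j = √(E i j) * √(F i j)) :
    S G ≤ (S E) ^ ((1:ℝ)/2) * (S F) ^ ((1:ℝ)/2) := by
  have hG0 : ∀ i j, 0 ≤ G i j := fun i j => by
    rw [hG]; exact mul_nonneg (Real.sqrt_nonneg _) (Real.sqrt_nonneg _)
  have hL := gelfand G
  have hE2 : Tendsto (fun n : ℕ => ((‖E ^ n‖₊ : ENNReal) ^ (1 / n : ℝ)) ^ ((1:ℝ)/2))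
      atTop (𝓝 ((S E) ^ ((1:ℝ)/2))) :=
    (ENNReal.continuous_rpow_const.tendsto (S E)).comp (gelfand E)
  have hF2 : Tendsto (fun n : ℕ => ((‖F ^ n‖₊ : ENNReal) ^ (1 / n : ℝ)) ^ ((1:ℝ)/2))
      atTop (𝓝 ((S F) ^ ((1:ℝ)/2))) :=
    (ENNReal.continuous_rpow_const.tendsto (S F)).comp (gelfand F)
  have hR : Tendsto (fun n : ℕ => ((‖E ^ n‖₊ : ENNReal) ^ (1 / n : ℝ)) ^ ((1:ℝ)/2)
        * ((‖F ^ n‖₊ : ENNReal) ^ (1 / n : ℝ)) ^ ((1:ℝ)/2))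
      atTop (𝓝 ((S E) ^ ((1:ℝ)/2) * (S F) ^ ((1:ℝ)/2))) := by
    refine ENNReal.Tendsto.mul hE2 ?_ hF2 ?_
    · exact Or.inr (ENNReal.rpow_ne_top_of_nonneg (by norm_num) (S_ne_top F))
    · exact Or.inr (ENNReal.rpow_ne_top_of_nonneg (by norm_num) (S_ne_top E))
  refine le_of_tendsto_of_tendsto' hL hR fun n => ?_
  rcases Nat.eq_zero_or_pos n with rfl | hn
  · simp
  · have hnorm : (‖G ^ n‖₊ : ENNReal)
        ≤ (‖E ^ n‖₊ : ENNReal) ^ ((1:ℝ)/2) * (‖F ^ n‖₊ : ENNReal) ^ ((1:ℝ)/2) :=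
      nnnorm_le_sqrt_mul_sqrt (entryPow_nonneg hG0 n) (entryPow_nonneg hE n)
        (entryPow_nonneg hF n) (pow_sqrtHad_le hE hF hG n)
    calc (‖G ^ n‖₊ : ENNReal) ^ (1 / n : ℝ)
        ≤ ((‖E ^ n‖₊ : ENNReal) ^ ((1:ℝ)/2) * (‖F ^ n‖₊ : ENNReal) ^ ((1:ℝ)/2)) ^ (1 / n : ℝ) :=
          ENNReal.rpow_le_rpow hnorm (by positivity)
      _ = ((‖E ^ n‖₊ : ENNReal) ^ (1 / n : ℝ)) ^ ((1:ℝ)/2)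
          * ((‖F ^ n‖₊ : ENNReal) ^ (1 / n : ℝ)) ^ ((1:ℝ)/2) := by
          rw [ENNReal.mul_rpow_of_nonneg _ _ (by positivity), ← ENNReal.rpow_mul,
            ← ENNReal.rpow_mul, ← ENNReal.rpow_mul, ← ENNReal.rpow_mul, mul_comm]
          ring_nf

lemma S_empty [IsEmpty N] (M : Matrix N N ℝ) : S M = 0 := by
  haveI : Subsingleton (Matrix N N ℂ) := ⟨fun a b => by ext i j; exact isEmptyElim i⟩
  have hspec : spectrum ℂ (M.map Complex.ofReal) = ∅ :=
    Set.eq_empty_iff_forall_notMem.mpr fun k hk =>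
      (spectrum.mem_iff.mp hk) (isUnit_of_subsingleton _)
  unfold S spectralRadius
  rw [hspec]
  simp

end SRAux5

theorem stmt5 {N : Type*} [Fintype N] [DecidableEq N] (A B : Matrix N N ℝ)
    (hA : ∀ i j, 0 ≤ A i j) (hB : ∀ i j, 0 ≤ B i j) :
    specRad (hadPow A (1/2) ⊙ hadPow B (1/2)) ≤
        specRad (hadPow (A * B) (1/2) ⊙ hadPow (B * A) (1/2)) ^ ((1 : ℝ) / 2) ∧
      specRad (hadPow (A * B) (1/2) ⊙ hadPow (B * A) (1/2)) ^ ((1 : ℝ) / 2) ≤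
        specRad (A * B) ^ ((1 : ℝ) / 2) := by
  open SRAux5 Real in
  rcases isEmpty_or_nonempty N with hN | hN
  · have h0 : ∀ M : Matrix N N ℝ, specRad M = 0 := fun M => by
      rw [specRad_eq_toReal_S, S_empty]; simp
    rw [h0, h0, h0]
    rw [Real.zero_rpow (by norm_num)]
    exact ⟨le_refl 0, le_refl 0⟩
  · set C := hadPow A (1/2) ⊙ hadPow B (1/2) with hCdef
    set D := hadPow (A * B) (1/2) ⊙ hadPow (B * A) (1/2) with hDdef
    have hAB0 : ∀ i j, 0 ≤ (A * B) i j := fun i j => by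
      rw [Matrix.mul_apply]
      exact Finset.sum_nonneg fun k _ => mul_nonneg (hA i k) (hB k j)
    have hBA0 : ∀ i j, 0 ≤ (B * A) i j := fun i j => by
      rw [Matrix.mul_apply]
      exact Finset.sum_nonneg fun k _ => mul_nonneg (hB i k) (hA k j)
    have hC : ∀ i j, C i j = √(A i j) * √(B i j) := fun i j => by
      simp only [hCdef, Matrix.hadamard_apply, hadPow]
      rw [Real.sqrt_eq_rpow, Real.sqrt_eq_rpow]
    have hD : ∀ i j, D i j = √((A * B) i j) * √((B * A) i j) := fun i j => by
      simp only [hDdef, Matrix.hadamard_apply, hadPow]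
      rw [Real.sqrt_eq_rpow, Real.sqrt_eq_rpow]
    have hC0 : ∀ i j, 0 ≤ C i j := fun i j => by
      rw [hC]; exact mul_nonneg (Real.sqrt_nonneg _) (Real.sqrt_nonneg _)
    have hD0 : ∀ i j, 0 ≤ D i j := fun i j => by
      rw [hD]; exact mul_nonneg (Real.sqrt_nonneg _) (Real.sqrt_nonneg _)
    -- entrywise Cauchy–Schwarz: (C * C) i j ≤ D i j
    have hCCD : ∀ i j, (C * C) i j ≤ D i j := by
      intro i j
      rw [Matrix.mul_apply, hD, Matrix.mul_apply, Matrix.mul_apply]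
      calc ∑ k, C i k * C k j
          = ∑ k, √(A i k * B k j) * √(B i k * A k j) := by
            refine Finset.sum_congr rfl fun k _ => ?_
            rw [hC, hC, Real.sqrt_mul (hA i k), Real.sqrt_mul (hB i k)]
            ring
        _ ≤ √(∑ k, A i k * B k j) * √(∑ k, B i k * A k j) := by
            refine Real.sum_sqrt_mul_sqrt_le _ (fun k => ?_) (fun k => ?_)
            · exact mul_nonneg (hA i k) (hB k j)
            · exact mul_nonneg (hB i k) (hA k j)
    constructor
    · -- first inequality
      have h1 : S C ≤ (S D) ^ ((1:ℝ)/2) := S_le_rpow_half hC0 hD0 hCCD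
      have h2 := ENNReal.toReal_mono
        (ENNReal.rpow_ne_top_of_nonneg (by norm_num) (S_ne_top D)) h1
      rw [← ENNReal.toReal_rpow] at h2
      rw [specRad_eq_toReal_S, specRad_eq_toReal_S]
      exact h2
    · -- second inequality
      have h3 : S D ≤ (S (A * B)) ^ ((1:ℝ)/2) * (S (B * A)) ^ ((1:ℝ)/2) :=
        S_sqrtHad_le hAB0 hBA0 hD
      rw [show S (B * A) = S (A * B) from (S_mul_comm A B).symm] at h3
      have h4 : (S (A * B)) ^ ((1:ℝ)/2) * (S (A * B)) ^ ((1:ℝ)/2) = S (A * B) := by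
        rcases eq_or_ne (S (A * B)) 0 with h0 | h0
        · rw [h0, ENNReal.zero_rpow_of_pos (by norm_num), mul_zero]
        · rw [← ENNReal.rpow_add _ _ h0 (S_ne_top _)]
          norm_num
      rw [h4] at h3
      have h5 := ENNReal.toReal_mono (S_ne_top (A * B)) h3
      rw [specRad_eq_toReal_S, specRad_eq_toReal_S]
      exact Real.rpow_le_rpow ENNReal.toReal_nonneg h5 (by norm_num)
end

section
/- Let A₁, …, A_m be nonnegative n×n real matrices, α₁, …, α_m > 0 with Σα_j = 1, define B_i as the Hadamard weighted geometric mean of the cyclic shift A_i, A_{i+1}, …, A_{i-1} with weights α₁,…,α_m, and set P_j = A_j A_{j+1} ⋯ A_m A₁ ⋯ A_{j-1}. Then ρ(B₁B₂⋯B_m) ≤ ρ(P₁^{(α₁)} ∘ P₂^{(α₂)} ∘ ⋯ ∘ P_m^{(α_m)}) ≤ ρ(A₁A₂⋯A_m). -/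
open Matrix

/-- `B_i`: Hadamard weighted geometric mean of the cyclic shift starting at `i`. -/
noncomputable def cycGeo {m : ℕ} {N : Type*} (A : Fin m → Matrix N N ℝ) (α : Fin m → ℝ)
    (i : Fin m) : Matrix N N ℝ :=
  fun x y => ∏ k, (A (i + k) x y) ^ (α k)

/-- `P_j = A_j A_{j+1} ⋯ A_m A₁ ⋯ A_{j-1}`, the cyclic product starting at `j`. -/
noncomputable def cycProd {m : ℕ} {N : Type*} [Fintype N] [DecidableEq N]
    (A : Fin m → Matrix N N ℝ) (j : Fin m) : Matrix N N ℝ :=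
  (List.ofFn fun k => A (j + k)).prod

namespace SRaux

open Filter Topology
open scoped ENNReal NNReal

set_option linter.unusedSectionVars false

attribute [local instance] Matrix.linftyOpNormedRing Matrix.linftyOpNormedAlgebra

variable {N : Type*} [Fintype N] [DecidableEq N]

/-- Complexification of a real matrix. -/
noncomputable def cm (X : Matrix N N ℝ) : Matrix N N ℂ := X.map Complex.ofReal

lemma cm_eq (X : Matrix N N ℝ) : cm X = Complex.ofRealHom.mapMatrix X := rfl

lemma cm_mul (X Y : Matrix N N ℝ) : cm (X * Y) = cm X * cm Y := by
  rw [cm_eq, cm_eq, cm_eq, _root_.map_mul]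

lemma cm_pow (X : Matrix N N ℝ) (n : ℕ) : cm (X ^ n) = cm X ^ n := by
  rw [cm_eq, cm_eq, map_pow]

lemma cm_entry (X : Matrix N N ℝ) (i j : N) : ‖cm X i j‖ = |X i j| := by
  simp [cm, Matrix.map_apply]

lemma norm_le_sum (X : Matrix N N ℂ) : ‖X‖ ≤ ∑ i, ∑ j, ‖X i j‖ := by
  have h2 : ‖X‖₊ ≤ ∑ i, ∑ j, ‖X i j‖₊ := by
    rw [Matrix.linfty_opNNNorm_def]
    apply Finset.sup_le
    intro i _
    exact Finset.single_le_sum (f := fun i => ∑ j, ‖X i j‖₊) (fun _ _ => zero_le)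
      (Finset.mem_univ i)
  have h3 := NNReal.coe_le_coe.mpr h2
  simpa [NNReal.coe_sum, coe_nnnorm] using h3

lemma entry_le_norm (X : Matrix N N ℂ) (i j : N) : ‖X i j‖ ≤ ‖X‖ := by
  have h1 : ‖X i j‖₊ ≤ ∑ j', ‖X i j'‖₊ :=
    Finset.single_le_sum (f := fun j' => ‖X i j'‖₊) (fun _ _ => zero_le) (Finset.mem_univ j)
  have h2 : (∑ j', ‖X i j'‖₊) ≤ (Finset.univ : Finset N).sup fun i => ∑ j, ‖X i j‖₊ :=
    Finset.le_sup (f := fun i => ∑ j, ‖X i j‖₊) (Finset.mem_univ i)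
  have h3 := NNReal.coe_le_coe.mpr (h1.trans h2)
  simpa [coe_nnnorm, Matrix.linfty_opNorm_def] using h3

lemma gelfand [Nonempty N] (X : Matrix N N ℝ) :
    Tendsto (fun n : ℕ => ‖cm X ^ n‖ ^ (1 / (n : ℝ))) atTop (𝓝 (specRad X)) := by
  have hfin : spectralRadius ℂ (cm X) ≠ ⊤ :=
    ((spectrum.spectralRadius_le_nnnorm (cm X)).trans_lt ENNReal.coe_lt_top).ne
  have h := spectrum.pow_nnnorm_pow_one_div_tendsto_nhds_spectralRadius (cm X)
  have h2 := (ENNReal.tendsto_toReal hfin).comp h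
  convert h2 using 2 with n
  rw [Function.comp_apply, ← ENNReal.coe_rpow_of_nonneg _ (by positivity : (0:ℝ) ≤ 1 / n)]
  simp [NNReal.coe_rpow]
  rfl

lemma specRad_nonneg (X : Matrix N N ℝ) : 0 ≤ specRad X := ENNReal.toReal_nonneg

lemma specRad_of_isEmpty [IsEmpty N] (X : Matrix N N ℝ) : specRad X = 0 := by
  haveI : Subsingleton (Matrix N N ℂ) := ⟨fun a b => by ext i; exact isEmptyElim i⟩
  have h : spectrum ℂ (X.map Complex.ofReal) = ∅ := by
    ext z
    simp [spectrum.mem_iff, isUnit_of_subsingleton]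
  unfold specRad spectralRadius
  rw [h]
  simp

lemma tendsto_const_rpow_inv {K : ℝ} (hK : 0 < K) :
    Tendsto (fun n : ℕ => K ^ (1 / (n : ℝ))) atTop (𝓝 1) := by
  have h0 : Tendsto (fun n : ℕ => 1 / (n : ℝ)) atTop (𝓝 0) := tendsto_one_div_atTop_nhds_zero_nat
  have c : ContinuousAt (fun t : ℝ => K ^ t) 0 := Real.continuousAt_const_rpow hK.ne'
  simpa [Function.comp_def] using c.tendsto.comp h0

lemma le_lim_of_le {x : ℝ} {f c : ℕ → ℝ} {K L : ℝ} (hK : 0 < K)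
    (hf : ∀ n, 0 ≤ f n) (hc : ∀ n, 0 ≤ c n)
    (hfx : Tendsto (fun n : ℕ => f n ^ (1 / (n : ℝ))) atTop (𝓝 x))
    (h : ∀ n, f n ≤ K * c n)
    (hL : Tendsto (fun n : ℕ => c n ^ (1 / (n : ℝ))) atTop (𝓝 L)) : x ≤ L := by
  have hg : Tendsto (fun n : ℕ => K ^ (1 / (n : ℝ)) * c n ^ (1 / (n : ℝ))) atTop (𝓝 (1 * L)) :=
    (tendsto_const_rpow_inv hK).mul hL
  have hle : ∀ n : ℕ, f n ^ (1 / (n : ℝ)) ≤ K ^ (1 / (n : ℝ)) * c n ^ (1 / (n : ℝ)) := by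
    intro n
    rw [← Real.mul_rpow hK.le (hc n)]
    exact Real.rpow_le_rpow (hf n) (h n) (by positivity)
  have := le_of_tendsto_of_tendsto' hfx hg hle
  simpa using this

lemma list_prod_entry_nonneg :
    ∀ (l : List (Matrix N N ℝ)), (∀ M ∈ l, ∀ i j, 0 ≤ M i j) → ∀ i j, 0 ≤ l.prod i j
  | [], _, i, j => by
      rw [List.prod_nil, Matrix.one_apply]
      split <;> norm_num
  | (M :: t), h, i, j => by
      rw [List.prod_cons, Matrix.mul_apply]
      refine Finset.sum_nonneg fun z _ => mul_nonneg (h M (List.mem_cons_self) i z)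
        (list_prod_entry_nonneg t (fun M' hM' => h M' (List.mem_cons_of_mem _ hM')) z j)

lemma pow_entry_nonneg {B : Matrix N N ℝ} (hB : ∀ i j, 0 ≤ B i j) (n : ℕ) :
    ∀ i j, 0 ≤ (B ^ n) i j := by
  induction n with
  | zero => intro i j; rw [pow_zero, Matrix.one_apply]; split <;> norm_num
  | succ n ih =>
      intro i j
      rw [pow_succ, Matrix.mul_apply]
      exact Finset.sum_nonneg fun z _ => mul_nonneg (ih i z) (hB z j)

lemma pow_entry_mono {B C : Matrix N N ℝ} (hB : ∀ i j, 0 ≤ B i j)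
    (hBC : ∀ i j, B i j ≤ C i j) (n : ℕ) : ∀ i j, (B ^ n) i j ≤ (C ^ n) i j := by
  induction n with
  | zero => intro i j; rw [pow_zero, pow_zero]
  | succ n ih =>
      intro i j
      rw [pow_succ, pow_succ, Matrix.mul_apply, Matrix.mul_apply]
      refine Finset.sum_le_sum fun z _ => mul_le_mul (ih i z) (hBC z j) (hB z j)
        (le_trans (pow_entry_nonneg hB n i z) (ih i z))

lemma holder_sum {ι : Type*} [Fintype ι] {Z : Type*} [Fintype Z]
    (α : ι → ℝ) (hα : ∀ k, 0 < α k) (hsum : ∑ k, α k = 1)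
    (f : ι → Z → ℝ) (hf : ∀ k z, 0 ≤ f k z) :
    ∑ z, ∏ k, f k z ^ α k ≤ ∏ k, (∑ z, f k z) ^ α k := by
  by_cases hz : ∃ k, ∑ z, f k z = 0
  · obtain ⟨k0, hk0⟩ := hz
    have hf0 : ∀ z, f k0 z = 0 := fun z =>
      (Finset.sum_eq_zero_iff_of_nonneg (fun z _ => hf k0 z)).mp hk0 z (Finset.mem_univ z)
    have hL : ∀ z : Z, ∏ k, f k z ^ α k = 0 := fun z =>
      Finset.prod_eq_zero (Finset.mem_univ k0) (by rw [hf0 z]; exact Real.zero_rpow (hα k0).ne')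
    rw [Finset.sum_congr rfl fun z _ => hL z, Finset.sum_const, smul_zero]
    exact Finset.prod_nonneg fun k _ =>
      Real.rpow_nonneg (Finset.sum_nonneg fun z _ => hf k z) _
  · push_neg at hz
    have hS : ∀ k, 0 < ∑ z, f k z := fun k =>
      ((Finset.sum_nonneg fun z _ => hf k z).lt_of_ne (Ne.symm (hz k)))
    have key : ∀ z : Z, ∏ k, f k z ^ α k
        ≤ (∏ k, (∑ z', f k z') ^ α k) * ∑ k, α k * (f k z / ∑ z', f k z') := by
      intro z
      have h1 : ∏ k, f k z ^ α k
          = (∏ k, (∑ z', f k z') ^ α k) * ∏ k, (f k z / ∑ z', f k z') ^ α k := by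
        rw [← Finset.prod_mul_distrib]
        refine Finset.prod_congr rfl fun k _ => ?_
        rw [← Real.mul_rpow (hS k).le (div_nonneg (hf k z) (hS k).le),
          mul_div_cancel₀ _ (hS k).ne']
      rw [h1]
      refine mul_le_mul_of_nonneg_left ?_
        (Finset.prod_nonneg fun k _ => Real.rpow_nonneg (hS k).le _)
      exact Real.geom_mean_le_arith_mean_weighted Finset.univ α _ (fun k _ => (hα k).le) hsum
        (fun k _ => div_nonneg (hf k z) (hS k).le)
    calc ∑ z, ∏ k, f k z ^ α k
        ≤ ∑ z, (∏ k, (∑ z', f k z') ^ α k) * ∑ k, α k * (f k z / ∑ z', f k z') :=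
          Finset.sum_le_sum fun z _ => key z
      _ = (∏ k, (∑ z', f k z') ^ α k) * ∑ z, ∑ k, α k * (f k z / ∑ z', f k z') := by
          rw [Finset.mul_sum]
      _ = ∏ k, (∑ z', f k z') ^ α k := by
          rw [Finset.sum_comm]
          have h4 : ∀ k, ∑ z, α k * (f k z / ∑ z', f k z') = α k := by
            intro k
            rw [← Finset.mul_sum, ← Finset.sum_div, div_self (hS k).ne', mul_one]
          rw [Finset.sum_congr rfl fun k _ => h4 k, hsum, mul_one]

lemma holder_prod {ι : Type*} [Fintype ι] (α : ι → ℝ) (hα : ∀ k, 0 < α k)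
    (hsum : ∑ k, α k = 1) :
    ∀ (m : ℕ) (C : Fin m → Matrix N N ℝ) (D : Fin m → ι → Matrix N N ℝ),
      (∀ i k x y, 0 ≤ D i k x y) → (∀ i x y, 0 ≤ C i x y) →
      (∀ i x y, C i x y ≤ ∏ k, D i k x y ^ α k) →
      ∀ x y, (List.ofFn C).prod x y ≤ ∏ k, ((List.ofFn fun i => D i k).prod x y) ^ α k := by
  intro m
  induction m with
  | zero =>
      intro C D _ _ _ x y
      simp only [List.ofFn_zero, List.prod_nil]
      by_cases hxy : x = y
      · subst hxy
        simp [Matrix.one_apply_eq, Real.one_rpow]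
      · rw [Matrix.one_apply_ne hxy]
        exact Finset.prod_nonneg fun k _ => Real.rpow_nonneg le_rfl _
  | succ n ih =>
      intro C D hD hC hCD x y
      have hS : ∀ (k : ι) i j, 0 ≤ (List.ofFn fun i => D i.succ k).prod i j := fun k =>
        list_prod_entry_nonneg _ (by
          intro M hM i j
          obtain ⟨i', hi'⟩ := List.mem_ofFn.mp hM
          rw [← hi']; exact hD _ _ _ _)
      have hR : ∀ i j, 0 ≤ (List.ofFn fun i : Fin n => C i.succ).prod i j :=
        list_prod_entry_nonneg _ (by
          intro M hM i j
          obtain ⟨i', hi'⟩ := List.mem_ofFn.mp hM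
          rw [← hi']; exact hC _ _ _)
      have ihr := ih (fun i => C i.succ) (fun i k => D i.succ k)
        (fun i k x y => hD _ _ _ _) (fun i x y => hC _ _ _) (fun i x y => hCD _ _ _)
      rw [List.ofFn_succ, List.prod_cons, Matrix.mul_apply]
      calc ∑ z, C 0 x z * (List.ofFn fun i : Fin n => C i.succ).prod z y
          ≤ ∑ z, ∏ k, (D 0 k x z * (List.ofFn fun i => D i.succ k).prod z y) ^ α k := by
            refine Finset.sum_le_sum fun z _ => ?_
            have h1 : C 0 x z * (List.ofFn fun i : Fin n => C i.succ).prod z y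
                ≤ (∏ k, D 0 k x z ^ α k) *
                  ∏ k, ((List.ofFn fun i => D i.succ k).prod z y) ^ α k :=
              mul_le_mul (hCD 0 x z) (ihr z y) (hR z y)
                (Finset.prod_nonneg fun k _ => Real.rpow_nonneg (hD 0 k x z) _)
            refine h1.trans (le_of_eq ?_)
            rw [← Finset.prod_mul_distrib]
            exact Finset.prod_congr rfl fun k _ =>
              (Real.mul_rpow (hD 0 k x z) (hS k z y)).symm
        _ ≤ ∏ k, (∑ z, D 0 k x z * (List.ofFn fun i => D i.succ k).prod z y) ^ α k :=
            holder_sum α hα hsum _ (fun k z => mul_nonneg (hD 0 k x z) (hS k z y))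
        _ = ∏ k, ((List.ofFn fun i => D i k).prod x y) ^ α k := by
            refine Finset.prod_congr rfl fun k _ => ?_
            rw [List.ofFn_succ, List.prod_cons, Matrix.mul_apply]

lemma specRad_le_prod [Nonempty N] {ι : Type*} [Fintype ι] (α : ι → ℝ)
    (hα : ∀ k, 0 < α k)
    (X : Matrix N N ℝ) (P : ι → Matrix N N ℝ)
    (hX : ∀ i j, 0 ≤ X i j) (hP : ∀ k i j, 0 ≤ P k i j)
    (h : ∀ n : ℕ, ∀ i j, (X ^ n) i j ≤ ∏ k, ((P k ^ n) i j) ^ α k) :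
    specRad X ≤ ∏ k, specRad (P k) ^ α k := by
  set c : ℕ → ℝ := fun n => ∏ k, ‖cm (P k) ^ n‖ ^ α k with hc
  have hcnn : ∀ n, 0 ≤ c n := fun n =>
    Finset.prod_nonneg fun k _ => Real.rpow_nonneg (norm_nonneg _) _
  have hK : (0:ℝ) < ((Fintype.card N : ℝ))^2 :=
    pow_pos (Nat.cast_pos.mpr Fintype.card_pos) 2
  have hnorm : ∀ n, ‖cm X ^ n‖ ≤ ((Fintype.card N : ℝ))^2 * c n := by
    intro n
    rw [← cm_pow]
    calc ‖cm (X ^ n)‖ ≤ ∑ i, ∑ j, ‖cm (X ^ n) i j‖ := norm_le_sum _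
      _ ≤ ∑ _i : N, ∑ _j : N, c n := by
          refine Finset.sum_le_sum fun i _ => Finset.sum_le_sum fun j _ => ?_
          rw [cm_entry, abs_of_nonneg (pow_entry_nonneg hX n i j)]
          refine (h n i j).trans (Finset.prod_le_prod
            (fun k _ => Real.rpow_nonneg (pow_entry_nonneg (hP k) n i j) _) fun k _ => ?_)
          refine Real.rpow_le_rpow (pow_entry_nonneg (hP k) n i j) ?_ (hα k).le
          have h2 := entry_le_norm (cm (P k ^ n)) i j
          rw [cm_entry, abs_of_nonneg (pow_entry_nonneg (hP k) n i j), cm_pow] at h2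
          exact h2
      _ = ((Fintype.card N : ℝ))^2 * c n := by
          simp [Finset.sum_const, nsmul_eq_mul]; ring
  have hLk : ∀ k : ι, Tendsto (fun n : ℕ => (‖cm (P k) ^ n‖ ^ (1/(n:ℝ))) ^ α k) atTop
      (𝓝 (specRad (P k) ^ α k)) := by
    intro k
    have cont : ContinuousAt (fun t : ℝ => t ^ α k) (specRad (P k)) :=
      Real.continuousAt_rpow_const _ _ (Or.inr (hα k).le)
    exact cont.tendsto.comp (gelfand (P k))
  have hL : Tendsto (fun n : ℕ => c n ^ (1/(n:ℝ))) atTop (𝓝 (∏ k, specRad (P k) ^ α k)) := by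
    have hprod := tendsto_finset_prod (Finset.univ)
      (fun (k : ι) (_ : k ∈ Finset.univ) => hLk k)
    convert hprod using 2 with n
    rw [hc]
    rw [← Real.finset_prod_rpow _ _ (fun k _ => Real.rpow_nonneg (norm_nonneg _) _) _]
    refine Finset.prod_congr rfl fun k _ => ?_
    rw [← Real.rpow_mul (norm_nonneg _), mul_comm, Real.rpow_mul (norm_nonneg _)]
  exact le_lim_of_le hK (fun n => norm_nonneg _) hcnn (gelfand X) hnorm hL

lemma biSup_erase_zero (S : Set ℂ) :
    (⨆ k ∈ S, (‖k‖₊ : ℝ≥0∞)) = ⨆ k ∈ S \ {0}, (‖k‖₊ : ℝ≥0∞) := by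
  apply le_antisymm
  · refine iSup₂_le fun k hk => ?_
    rcases eq_or_ne k 0 with rfl | hne
    · simp
    · exact le_iSup₂ (f := fun (k : ℂ) (_ : k ∈ S \ {0}) => (‖k‖₊ : ℝ≥0∞)) k ⟨hk, hne⟩
  · exact iSup₂_le fun k hk =>
      le_iSup₂ (f := fun (k : ℂ) (_ : k ∈ S) => (‖k‖₊ : ℝ≥0∞)) k hk.1

lemma specRad_mul_comm (X Y : Matrix N N ℝ) : specRad (X * Y) = specRad (Y * X) := by
  unfold specRad
  congr 1
  rw [show (X*Y).map Complex.ofReal = cm X * cm Y from cm_mul X Y,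
      show (Y*X).map Complex.ofReal = cm Y * cm X from cm_mul Y X]
  unfold spectralRadius
  rw [biSup_erase_zero, biSup_erase_zero (spectrum ℂ (cm Y * cm X)),
    spectrum.nonzero_mul_comm]

lemma ofFn_cyc {m : ℕ} {β : Type*} (A : Fin m → β) (k : Fin m) :
    List.ofFn (fun i : Fin m => A (k + i)) =
      (List.ofFn A).drop k.val ++ (List.ofFn A).take k.val := by
  have hk := k.isLt
  apply List.ext_getElem
  · simp only [List.length_ofFn, List.length_append, List.length_drop, List.length_take]
    omega
  · intro i h1 h2
    rw [List.getElem_ofFn, List.getElem_append]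
    simp only [List.length_drop, List.length_ofFn]
    split
    · rename_i hlt
      rw [List.getElem_drop, List.getElem_ofFn]
      congr 1
      apply Fin.ext
      simp only [Fin.add_def]
      rw [Nat.mod_eq_of_lt (by simp at h1; omega)]
    · rename_i hge
      rw [List.getElem_take, List.getElem_ofFn]
      congr 1
      apply Fin.ext
      simp only [Fin.add_def]
      simp only [List.length_ofFn] at h1
      have h3 : k.val + i = m + (k.val + i - m) := by omega
      rw [h3, Nat.add_mod_left, Nat.mod_eq_of_lt (by omega)]
      omega

lemma specRad_cycProd {m : ℕ} (A : Fin m → Matrix N N ℝ) (k : Fin m) :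
    specRad (cycProd A k) = specRad ((List.ofFn A).prod) := by
  unfold cycProd
  rw [ofFn_cyc, List.prod_append, specRad_mul_comm, ← List.prod_append,
    List.take_append_drop]

end SRaux

theorem stmt7 {m : ℕ} (hm : 0 < m) {N : Type*} [Fintype N] [DecidableEq N]
    (A : Fin m → Matrix N N ℝ) (hA : ∀ k, ∀ i j, 0 ≤ A k i j)
    (α : Fin m → ℝ) (hα : ∀ k, 0 < α k) (hsum : ∑ k, α k = 1) :
    specRad (List.ofFn (cycGeo A α)).prod ≤
        specRad (fun i j => ∏ k, (cycProd A k i j) ^ (α k)) ∧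
      specRad (fun i j => ∏ k, (cycProd A k i j) ^ (α k)) ≤ specRad (List.ofFn A).prod := by
  open SRaux in
  rcases isEmpty_or_nonempty N with hN | hN
  · simp only [specRad_of_isEmpty]
    exact ⟨specRad_nonneg _, (specRad_of_isEmpty _).le⟩
  · haveI : Nonempty (Fin m) := ⟨⟨0, hm⟩⟩
    set C : Matrix N N ℝ := fun i j => ∏ k, (cycProd A k i j) ^ (α k) with hCdef
    -- nonnegativity facts
    have hPnn : ∀ (k : Fin m) i j, 0 ≤ cycProd A k i j := by
      intro k
      refine list_prod_entry_nonneg _ ?_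
      intro M hM i j
      obtain ⟨i', hi'⟩ := List.mem_ofFn.mp hM
      rw [← hi']; exact hA _ _ _
    have hCnn : ∀ i j, 0 ≤ C i j := fun i j =>
      Finset.prod_nonneg fun k _ => Real.rpow_nonneg (hPnn k i j) _
    have hBnn : ∀ i j, 0 ≤ (List.ofFn (cycGeo A α)).prod i j := by
      refine list_prod_entry_nonneg _ ?_
      intro M hM i j
      obtain ⟨i', hi'⟩ := List.mem_ofFn.mp hM
      rw [← hi']
      exact Finset.prod_nonneg fun k _ => Real.rpow_nonneg (hA _ _ _) _
    -- entrywise: B₁⋯B_m ≤ C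
    have hBC : ∀ x y, (List.ofFn (cycGeo A α)).prod x y ≤ C x y := by
      intro x y
      have h := holder_prod α hα hsum m (cycGeo A α) (fun i k => A (i + k))
        (fun i k x y => hA _ _ _) (fun i x y =>
          Finset.prod_nonneg fun k _ => Real.rpow_nonneg (hA _ _ _) _)
        (fun i x y => le_rfl) x y
      refine h.trans (le_of_eq ?_)
      refine Finset.prod_congr rfl fun k _ => ?_
      have hl : (List.ofFn fun i => A (i + k)) = List.ofFn fun i => A (k + i) := by
        congr 1
        funext i
        rw [add_comm]
      rw [hl]
      rfl
    -- entrywise powers: Cⁿ ≤ ∘ (P_k)ⁿ^(α k)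
    have hCpow : ∀ (n : ℕ) i j, (C ^ n) i j ≤ ∏ k, ((cycProd A k ^ n) i j) ^ α k := by
      intro n i j
      have h := holder_prod α hα hsum n (fun _ => C) (fun _ k => cycProd A k)
        (fun i k x y => hPnn k x y) (fun i x y => hCnn x y) (fun i x y => le_rfl) i j
      have e1 : (List.ofFn fun _ : Fin n => C) = List.replicate n C := List.ofFn_const n C
      have e2 : ∀ k : Fin m, (List.ofFn fun _ : Fin n => cycProd A k)
          = List.replicate n (cycProd A k) := fun k => List.ofFn_const n _
      rw [e1, List.prod_replicate] at h
      refine h.trans (le_of_eq ?_)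
      refine Finset.prod_congr rfl fun k _ => ?_
      rw [e2 k, List.prod_replicate]
    -- first inequality
    have ineq1 : specRad (List.ofFn (cycGeo A α)).prod ≤ specRad C := by
      have h := specRad_le_prod (ι := Unit) (fun _ => (1:ℝ)) (fun _ => one_pos)
        ((List.ofFn (cycGeo A α)).prod) (fun _ => C) hBnn (fun _ => hCnn) ?_
      · simpa using h
      · intro n i j
        simp only [Finset.univ_unique, Finset.prod_singleton, Real.rpow_one]
        exact pow_entry_mono hBnn hBC n i j
    -- second inequality
    have ineq2 : specRad C ≤ specRad (List.ofFn A).prod := by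
      have h := specRad_le_prod (ι := Fin m) α hα C (cycProd A) hCnn hPnn hCpow
      refine h.trans (le_of_eq ?_)
      have he : ∀ k : Fin m, specRad (cycProd A k) = specRad ((List.ofFn A).prod) :=
        fun k => specRad_cycProd A k
      have heq1 : ∏ k, specRad (cycProd A k) ^ α k
          = ∏ k : Fin m, specRad ((List.ofFn A).prod) ^ α k :=
        Finset.prod_congr rfl fun k _ => by rw [he k]
      rw [heq1, ← Real.rpow_sum_of_nonneg (specRad_nonneg _) (fun k _ => (hα k).le), hsum,
        Real.rpow_one]
    exact ⟨ineq1, ineq2⟩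
end

section
/- Let A₁, …, A_m be nonnegative n×n real matrices and P_j = A_j ⋯ A_m A₁ ⋯ A_{j-1}. Then ρ(A₁^{(1/m)} ∘ ⋯ ∘ A_m^{(1/m)}) ≤ ρ(P₁^{(1/m)} ∘ ⋯ ∘ P_m^{(1/m)})^{1/m} ≤ ρ(A₁A₂⋯A_m)^{1/m}. -/
open Matrix

namespace StmtAux

open Filter Topology
open Fin.NatCast Fin.CommRing

set_option linter.unusedSectionVars false

section Entrywise

variable {N : Type*} [Fintype N] [DecidableEq N]

lemma mul_nonneg' {X Y : Matrix N N ℝ} (hX : ∀ i j, 0 ≤ X i j) (hY : ∀ i j, 0 ≤ Y i j) :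
    ∀ i j, 0 ≤ (X * Y) i j := fun i j => by
  rw [Matrix.mul_apply]
  exact Finset.sum_nonneg fun k _ => mul_nonneg (hX i k) (hY k j)

lemma pow_nonneg' {X : Matrix N N ℝ} (hX : ∀ i j, 0 ≤ X i j) (s : ℕ) :
    ∀ i j, 0 ≤ (X ^ s) i j := by
  induction s with
  | zero => intro i j; rw [pow_zero]; by_cases h : i = j <;> simp [Matrix.one_apply, h]
  | succ t ih => rw [pow_succ]; exact mul_nonneg' ih hX

lemma mul_mono' {X X' Y Y' : Matrix N N ℝ} (hX : ∀ i j, 0 ≤ X i j) (hY : ∀ i j, 0 ≤ Y i j)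
    (hXX : ∀ i j, X i j ≤ X' i j) (hYY : ∀ i j, Y i j ≤ Y' i j) :
    ∀ i j, (X * Y) i j ≤ (X' * Y') i j := fun i j => by
  rw [Matrix.mul_apply, Matrix.mul_apply]
  exact Finset.sum_le_sum fun k _ =>
    mul_le_mul (hXX i k) (hYY k j) (hY k j) ((hX i k).trans (hXX i k))

lemma pow_mono' {X X' : Matrix N N ℝ} (hX : ∀ i j, 0 ≤ X i j)
    (hXX : ∀ i j, X i j ≤ X' i j) (s : ℕ) :
    ∀ i j, (X ^ s) i j ≤ (X' ^ s) i j := by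
  induction s with
  | zero => intro i j; exact le_rfl
  | succ t ih =>
      rw [pow_succ, pow_succ]
      exact mul_mono' (pow_nonneg' hX t) hX ih hXX

/-- Generalized (multi-function) Hölder inequality with positive weights summing to 1. -/
lemma holder {ι κ : Type*} [Fintype ι] (s : Finset κ) (w : ι → ℝ) (f : ι → κ → ℝ)
    (hw : ∀ l, 0 < w l) (hw1 : ∑ l, w l = 1) (hf : ∀ l k, 0 ≤ f l k) :
    ∑ k ∈ s, ∏ l, f l k ^ w l ≤ ∏ l, (∑ k ∈ s, f l k) ^ w l := by
  by_cases hS : ∃ l₀, ∑ k ∈ s, f l₀ k = 0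
  · obtain ⟨l₀, hl₀⟩ := hS
    have hf0 : ∀ k ∈ s, f l₀ k = 0 := by
      intro k hk
      exact le_antisymm (by
        have := Finset.sum_le_sum_of_subset_of_nonneg (Finset.singleton_subset_iff.2 hk)
          (fun x _ _ => hf l₀ x)
        simpa [hl₀] using this) (hf l₀ k)
    have hz : ∑ k ∈ s, ∏ l, f l k ^ w l = 0 := by
      apply Finset.sum_eq_zero
      intro k hk
      apply Finset.prod_eq_zero (Finset.mem_univ l₀)
      rw [hf0 k hk, Real.zero_rpow (hw l₀).ne']
    rw [hz]
    exact Finset.prod_nonneg fun l _ => Real.rpow_nonneg (Finset.sum_nonneg fun k _ => hf l k) _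
  · push_neg at hS
    have hSpos : ∀ l, 0 < ∑ k ∈ s, f l k := fun l =>
      lt_of_le_of_ne (Finset.sum_nonneg fun k _ => hf l k) (Ne.symm (hS l))
    set S : ι → ℝ := fun l => ∑ k ∈ s, f l k with hSdef
    have key : ∀ k ∈ s, ∏ l, (f l k / S l) ^ w l ≤ ∑ l, w l * (f l k / S l) := by
      intro k _
      exact Real.geom_mean_le_arith_mean_weighted Finset.univ w (fun l => f l k / S l)
        (fun l _ => (hw l).le) hw1 (fun l _ => div_nonneg (hf l k) (hSpos l).le)
    have hsum : ∑ k ∈ s, ∏ l, (f l k / S l) ^ w l ≤ 1 := by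
      calc ∑ k ∈ s, ∏ l, (f l k / S l) ^ w l ≤ ∑ k ∈ s, ∑ l, w l * (f l k / S l) :=
            Finset.sum_le_sum key
        _ = ∑ l, w l * (∑ k ∈ s, f l k / S l) := by
            rw [Finset.sum_comm]; simp [Finset.mul_sum]
        _ = ∑ l, w l := by
            apply Finset.sum_congr rfl
            intro l _
            rw [← Finset.sum_div, div_self (hSpos l).ne', mul_one]
        _ = 1 := hw1
    have hprodpos : 0 < ∏ l, S l ^ w l :=
      Finset.prod_pos fun l _ => Real.rpow_pos_of_pos (hSpos l) _
    rw [← div_le_one hprodpos, Finset.sum_div]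
    calc ∑ k ∈ s, (∏ l, f l k ^ w l) / ∏ l, S l ^ w l
        = ∑ k ∈ s, ∏ l, (f l k / S l) ^ w l := by
          apply Finset.sum_congr rfl
          intro k _
          rw [← Finset.prod_div_distrib]
          exact Finset.prod_congr rfl fun l _ =>
            (Real.div_rpow (hf l k) (hSpos l).le (w l)).symm
      _ ≤ 1 := hsum

variable {m : ℕ}

lemma hadGeo_nonneg (V : Fin m → Matrix N N ℝ) (w : Fin m → ℝ)
    (hV : ∀ l i j, 0 ≤ V l i j) : ∀ i j, 0 ≤ hadGeo V w i j := fun i j =>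
  Finset.prod_nonneg fun l _ => Real.rpow_nonneg (hV l i j) _

lemma hadGeo_mul (X Y : Fin m → Matrix N N ℝ) (w : Fin m → ℝ)
    (hw : ∀ l, 0 < w l) (hw1 : ∑ l, w l = 1)
    (hX : ∀ l i j, 0 ≤ X l i j) (hY : ∀ l i j, 0 ≤ Y l i j) :
    ∀ i j, (hadGeo X w * hadGeo Y w) i j ≤ hadGeo (fun l => X l * Y l) w i j := by
  intro i j
  rw [Matrix.mul_apply]
  have heq : ∀ k, hadGeo X w i k * hadGeo Y w k j = ∏ l, (X l i k * Y l k j) ^ w l := by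
    intro k
    simp only [hadGeo]
    rw [← Finset.prod_mul_distrib]
    exact Finset.prod_congr rfl fun l _ =>
      (Real.mul_rpow (hX l i k) (hY l k j)).symm
  simp_rw [heq]
  have h2 := holder Finset.univ w (fun l k => X l i k * Y l k j) hw hw1
    (fun l k => mul_nonneg (hX l i k) (hY l k j))
  refine h2.trans_eq ?_
  simp only [hadGeo]
  exact Finset.prod_congr rfl fun l _ => by rw [Matrix.mul_apply]

variable [NeZero m]

/-- Partial cyclic products: `ppL A t l = A l * A (l+1) * ⋯ * A (l+t-1)`. -/
noncomputable def ppL (A : Fin m → Matrix N N ℝ) : ℕ → Fin m → Matrix N N ℝ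
  | 0 => fun _ => 1
  | (t+1) => fun l => A l * ppL A t (l + 1)

lemma ppL_nonneg {A : Fin m → Matrix N N ℝ} (hA : ∀ k i j, 0 ≤ A k i j) (t : ℕ) :
    ∀ l i j, 0 ≤ ppL A t l i j := by
  induction t with
  | zero =>
      intro l i j
      simp only [ppL]
      by_cases h : i = j <;> simp [Matrix.one_apply, h]
  | succ t ih => intro l; exact mul_nonneg' (hA l) (ih (l + 1))

lemma ppL_add (A : Fin m → Matrix N N ℝ) (s t : ℕ) :
    ∀ l : Fin m, ppL A (s + t) l = ppL A s l * ppL A t (l + (s : Fin m)) := by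
  induction s with
  | zero => intro l; simp [ppL]
  | succ s ih =>
      intro l
      have h1 : s + 1 + t = (s + t) + 1 := by omega
      rw [h1]
      simp only [ppL]
      rw [ih (l + 1), mul_assoc]
      have h2 : (l + 1) + (s : Fin m) = l + ((s+1 : ℕ) : Fin m) := by push_cast; ring
      rw [h2]

lemma cycProd_eq_ppL (A : Fin m → Matrix N N ℝ) (j : Fin m) :
    cycProd A j = ppL A m j := by
  have key : ∀ (t : ℕ) (g : Fin m),
      (List.ofFn fun k : Fin t => A (g + ((k : ℕ) : Fin m))).prod = ppL A t g := by
    intro t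
    induction t with
    | zero => intro g; simp [ppL]
    | succ t ih =>
        intro g
        rw [List.ofFn_succ, List.prod_cons]
        simp only [ppL]
        have hfun : (fun k : Fin t => A (g + (((k.succ : Fin (t+1)) : ℕ) : Fin m)))
            = fun k : Fin t => A ((g + 1) + ((k : ℕ) : Fin m)) := by
          funext k
          congr 1
          have h3 : ((k.succ : Fin (t+1)) : ℕ) = (k : ℕ) + 1 := rfl
          rw [h3]
          push_cast
          ring
        rw [hfun, ih (g + 1)]
        congr 2
        simp
  have hkey := key m j
  rw [cycProd]
  have hfun : (fun k : Fin m => A (j + k)) = fun k : Fin m => A (j + ((k : ℕ) : Fin m)) := by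
    funext k
    rw [Fin.cast_val_eq_self]
  rw [hfun, hkey]

/-- The key entrywise inequality: powers of a Hadamard geometric mean are dominated
entrywise by the Hadamard geometric mean of the (shifted) partial products. -/
lemma pow_hadGeo_le (A : Fin m → Matrix N N ℝ) (hA : ∀ k i j, 0 ≤ A k i j)
    (c : ℝ) (hw : ∀ _l : Fin m, 0 < (fun _ : Fin m => c) _l)
    (hw1 : ∑ _l : Fin m, c = 1) (t : ℕ) :
    ∀ i j, ((hadGeo A (fun _ => c)) ^ t) i j
      ≤ hadGeo (fun l => ppL A t l) (fun _ => c) i j := by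
  set w : Fin m → ℝ := fun _ => c with hwdef
  have hw1' : ∑ l, w l = 1 := hw1
  induction t with
  | zero =>
      intro i j
      rw [pow_zero]
      by_cases h : i = j
      · subst h
        have : hadGeo (fun l => ppL A 0 l) w i i = 1 := by
          simp only [hadGeo, ppL, Matrix.one_apply_eq]
          simp [Real.one_rpow]
        rw [this, Matrix.one_apply_eq]
      · rw [Matrix.one_apply_ne h]
        exact hadGeo_nonneg _ w (fun l => ppL_nonneg hA 0 l) i j
  | succ t ih =>
      intro i j
      rw [pow_succ']
      have hshift : hadGeo (fun l => ppL A t l) w = hadGeo (fun l => ppL A t (l + 1)) w := by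
        funext i' j'
        simp only [hadGeo]
        exact (Equiv.prod_comp (Equiv.addRight (1 : Fin m))
          (fun l => (ppL A t l i' j') ^ c)).symm
      have step1 : (hadGeo A w * (hadGeo A w) ^ t) i j
          ≤ (hadGeo A w * hadGeo (fun l => ppL A t (l + 1)) w) i j := by
        apply mul_mono' (hadGeo_nonneg A w hA) (pow_nonneg' (hadGeo_nonneg A w hA) t)
          (fun _ _ => le_rfl)
        intro i' j'
        have hih := ih i' j'
        rwa [hshift] at hih
      refine step1.trans ?_
      have step2 := hadGeo_mul A (fun l => ppL A t (l + 1)) w hw hw1' hA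
        (fun l => ppL_nonneg hA t (l + 1)) i j
      refine step2.trans_eq ?_
      have hppL : (fun l => A l * ppL A t (l + 1)) = fun l => ppL A (t + 1) l := by
        funext l
        simp [ppL]
      rw [hppL]

/-- Entrywise: `C^s ≤ hadGeo (P^s)` where `C = hadGeo P`. -/
lemma pow_hadGeo_le' (P : Fin m → Matrix N N ℝ) (hP : ∀ l i j, 0 ≤ P l i j)
    (w : Fin m → ℝ) (hw : ∀ l, 0 < w l) (hw1 : ∑ l, w l = 1) (s : ℕ) :
    ∀ i j, ((hadGeo P w) ^ s) i j ≤ hadGeo (fun l => (P l) ^ s) w i j := by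
  induction s with
  | zero =>
      intro i j
      rw [pow_zero]
      by_cases h : i = j
      · subst h
        have : hadGeo (fun l => (P l) ^ 0) w i i = 1 := by
          simp only [hadGeo, pow_zero, Matrix.one_apply_eq]
          simp [Real.one_rpow]
        rw [this, Matrix.one_apply_eq]
      · rw [Matrix.one_apply_ne h]
        exact hadGeo_nonneg _ w (fun l => pow_nonneg' (hP l) 0) i j
  | succ s ih =>
      intro i j
      rw [pow_succ']
      have step1 : (hadGeo P w * (hadGeo P w) ^ s) i j
          ≤ (hadGeo P w * hadGeo (fun l => (P l) ^ s) w) i j :=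
        mul_mono' (hadGeo_nonneg P w hP) (pow_nonneg' (hadGeo_nonneg P w hP) s)
          (fun _ _ => le_rfl) ih i j
      refine step1.trans ?_
      have step2 := hadGeo_mul P (fun l => (P l) ^ s) w hw hw1 hP
        (fun l => pow_nonneg' (hP l) s) i j
      refine step2.trans_eq ?_
      congr 1
      funext l
      rw [← pow_succ']

end Entrywise

section Norm

variable {N : Type*} [Fintype N] [DecidableEq N]

attribute [local instance] Matrix.linftyOpNormedRing Matrix.linftyOpNormedAlgebra

lemma nnnorm_map_ofReal (M : Matrix N N ℝ) : ‖M.map Complex.ofReal‖₊ = ‖M‖₊ := by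
  rw [Matrix.linfty_opNNNorm_def, Matrix.linfty_opNNNorm_def]
  congr 1
  funext i
  exact Finset.sum_congr rfl fun j _ => by simp [Matrix.map_apply]

lemma map_ofReal_pow (M : Matrix N N ℝ) (s : ℕ) :
    (M ^ s).map Complex.ofReal = (M.map Complex.ofReal) ^ s := by
  have h : (M.map Complex.ofReal) = Complex.ofRealHom.mapMatrix M := rfl
  rw [h, ← map_pow]
  rfl

lemma specRad_ne_top (M : Matrix N N ℝ) : spectralRadius ℂ (M.map Complex.ofReal) ≠ ⊤ := by
  refine ((spectrum.spectralRadius_le_pow_nnnorm_pow_one_div ℂ (M.map Complex.ofReal) 0).trans_lt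
    ?_).ne
  apply ENNReal.mul_lt_top
  · exact ENNReal.rpow_lt_top_of_nonneg (by norm_num) ENNReal.coe_ne_top
  · exact ENNReal.rpow_lt_top_of_nonneg (by norm_num) ENNReal.coe_ne_top

/-- Real-valued Gelfand formula for the linfty operator norm. -/
lemma gelfand (M : Matrix N N ℝ) :
    Tendsto (fun s : ℕ => ‖M ^ s‖ ^ (1 / (s : ℝ))) atTop (𝓝 (specRad M)) := by
  set a := M.map Complex.ofReal with ha
  have hg := spectrum.pow_nnnorm_pow_one_div_tendsto_nhds_spectralRadius a
  have htr := (ENNReal.tendsto_toReal (specRad_ne_top M)).comp hg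
  have hfun : (ENNReal.toReal ∘ fun s : ℕ => ((‖a ^ s‖₊ : ENNReal) ^ (1/(s:ℝ))))
      = fun s : ℕ => ‖M ^ s‖ ^ (1/(s:ℝ)) := by
    funext s
    rw [Function.comp_apply, ← ENNReal.toReal_rpow, ENNReal.coe_toReal,
      ha, ← map_ofReal_pow, nnnorm_map_ofReal, coe_nnnorm]
  rw [hfun] at htr
  exact htr

lemma norm_mono {M M' : Matrix N N ℝ} (hM : ∀ i j, 0 ≤ M i j)
    (h : ∀ i j, M i j ≤ M' i j) : ‖M‖ ≤ ‖M'‖ := by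
  rw [Matrix.linfty_opNorm_def, Matrix.linfty_opNorm_def, NNReal.coe_le_coe]
  apply Finset.sup_le
  intro i _
  refine le_trans (Finset.sum_le_sum fun j _ => ?_)
    (Finset.le_sup (f := fun i => ∑ j, ‖M' i j‖₊) (Finset.mem_univ i))
  rw [← NNReal.coe_le_coe, coe_nnnorm, coe_nnnorm,
    Real.norm_of_nonneg (hM i j), Real.norm_of_nonneg ((hM i j).trans (h i j))]
  exact h i j

lemma row_sum_le_norm (M : Matrix N N ℝ) (i : N) : ∑ j, ‖M i j‖ ≤ ‖M‖ := by
  rw [Matrix.linfty_opNorm_def]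
  have := Finset.le_sup (f := fun i => ∑ j, ‖M i j‖₊) (Finset.mem_univ i)
  rw [← NNReal.coe_le_coe] at this
  refine le_trans (le_of_eq ?_) this
  push_cast
  rfl

lemma norm_hadGeo_le {m : ℕ} (V : Fin m → Matrix N N ℝ) (w : Fin m → ℝ)
    (hw : ∀ l, 0 < w l) (hw1 : ∑ l, w l = 1) (hV : ∀ l i j, 0 ≤ V l i j) :
    ‖hadGeo V w‖ ≤ ∏ l, ‖V l‖ ^ w l := by
  have key : ∀ i : N, ∑ j, ‖hadGeo V w i j‖ ≤ ∏ l, ‖V l‖ ^ w l := by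
    intro i
    have e1 : ∀ j, ‖hadGeo V w i j‖ = ∏ l, (V l i j) ^ w l := by
      intro j
      rw [Real.norm_of_nonneg]
      · rfl
      · exact Finset.prod_nonneg fun l _ => Real.rpow_nonneg (hV l i j) _
    calc (∑ j, ‖hadGeo V w i j‖) = ∑ j, ∏ l, (V l i j) ^ w l :=
          Finset.sum_congr rfl fun j _ => e1 j
      _ ≤ ∏ l, (∑ j, V l i j) ^ w l :=
          holder Finset.univ w (fun l j => V l i j) hw hw1 (fun l j => hV l i j)
      _ ≤ ∏ l, ‖V l‖ ^ w l := by
          apply Finset.prod_le_prod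
          · intro l _
            exact Real.rpow_nonneg (Finset.sum_nonneg fun j _ => hV l i j) _
          · intro l _
            apply Real.rpow_le_rpow (Finset.sum_nonneg fun j _ => hV l i j) _ (hw l).le
            refine le_trans (le_of_eq ?_) (row_sum_le_norm (V l) i)
            exact Finset.sum_congr rfl fun j _ => (Real.norm_of_nonneg (hV l i j)).symm
  rcases isEmpty_or_nonempty N with hN | hN
  · rw [Matrix.linfty_opNorm_def]
    have he : (Finset.univ : Finset N) = ∅ := Finset.univ_eq_empty
    rw [he, Finset.sup_empty]
    simp only [bot_eq_zero', NNReal.coe_zero]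
    exact Finset.prod_nonneg fun l _ => Real.rpow_nonneg (norm_nonneg _) _
  · obtain ⟨i, -, hi⟩ := Finset.exists_mem_eq_sup (Finset.univ : Finset N)
      Finset.univ_nonempty (fun i => ∑ j, ‖(hadGeo V w) i j‖₊)
    rw [Matrix.linfty_opNorm_def, hi]
    refine le_trans (le_of_eq ?_) (key i)
    push_cast
    rfl

lemma claim1_aux {m : ℕ} (hm : 0 < m) {B C : Matrix N N ℝ}
    (hB : ∀ i j, 0 ≤ B i j)
    (h : ∀ s : ℕ, ∀ i j, (B ^ (m * s)) i j ≤ (C ^ s) i j) :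
    specRad B ≤ specRad C ^ (1/(m:ℝ)) := by
  have hms : Tendsto (fun s : ℕ => m * s) atTop atTop :=
    tendsto_atTop_mono (fun s => Nat.le_mul_of_pos_left s hm) tendsto_id
  have gB : Tendsto (fun s : ℕ => ‖B ^ (m*s)‖ ^ (1/((m*s : ℕ):ℝ))) atTop (𝓝 (specRad B)) :=
    (gelfand B).comp hms
  have gC : Tendsto (fun s : ℕ => (‖C ^ s‖ ^ (1/(s:ℝ))) ^ (1/(m:ℝ))) atTop
      (𝓝 (specRad C ^ (1/(m:ℝ)))) :=
    (gelfand C).rpow_const (Or.inr (by positivity))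
  refine le_of_tendsto_of_tendsto' gB gC ?_
  intro s
  have h1 : ‖B ^ (m*s)‖ ≤ ‖C ^ s‖ := norm_mono (pow_nonneg' hB (m*s)) (h s)
  have hmm : (1/((m*s : ℕ):ℝ)) = (1/(s:ℝ)) * (1/(m:ℝ)) := by
    push_cast
    rw [one_div_mul_one_div, mul_comm (s:ℝ)]
  calc ‖B^(m*s)‖ ^ (1/((m*s:ℕ):ℝ)) ≤ ‖C^s‖ ^ (1/((m*s:ℕ):ℝ)) :=
        Real.rpow_le_rpow (norm_nonneg _) h1 (by positivity)
    _ = (‖C^s‖ ^ (1/(s:ℝ)))^(1/(m:ℝ)) := by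
        rw [hmm, Real.rpow_mul (norm_nonneg _)]

lemma claim2_aux {m : ℕ} (hm : 0 < m) {C : Matrix N N ℝ} {P : Fin m → Matrix N N ℝ}
    (hP : ∀ l i j, 0 ≤ P l i j) (hC : ∀ i j, 0 ≤ C i j)
    (h : ∀ s : ℕ, ∀ i j, (C ^ s) i j ≤ hadGeo (fun l => (P l) ^ s) (fun _ => 1/(m:ℝ)) i j) :
    specRad C ≤ ∏ l, specRad (P l) ^ (1/(m:ℝ)) := by
  have hwpos : ∀ _l : Fin m, (0:ℝ) < 1/(m:ℝ) := fun _ => by positivity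
  have hw1 : ∑ _l : Fin m, (1:ℝ)/(m:ℝ) = 1 := by
    rw [Finset.sum_const, Finset.card_univ, Fintype.card_fin, nsmul_eq_mul]
    field_simp
  have gP : Tendsto (fun s : ℕ => ∏ l, (‖(P l)^s‖ ^ (1/(s:ℝ))) ^ (1/(m:ℝ))) atTop
      (𝓝 (∏ l, specRad (P l) ^ (1/(m:ℝ)))) :=
    tendsto_finset_prod _ fun l _ => (gelfand (P l)).rpow_const (Or.inr (by positivity))
  refine le_of_tendsto_of_tendsto' (gelfand C) gP ?_
  intro s
  have h1 : ‖C^s‖ ≤ ∏ l, ‖(P l)^s‖ ^ (1/(m:ℝ)) := by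
    refine le_trans (norm_mono (pow_nonneg' hC s) (h s)) ?_
    exact norm_hadGeo_le _ _ hwpos hw1 (fun l => pow_nonneg' (hP l) s)
  calc ‖C^s‖^(1/(s:ℝ)) ≤ (∏ l, ‖(P l)^s‖^(1/(m:ℝ)))^(1/(s:ℝ)) :=
        Real.rpow_le_rpow (norm_nonneg _) h1 (by positivity)
    _ = ∏ l, (‖(P l)^s‖^(1/(s:ℝ)))^(1/(m:ℝ)) := by
        rw [← Real.finset_prod_rpow _ _ (fun l _ => Real.rpow_nonneg (norm_nonneg _) _)]
        exact Finset.prod_congr rfl fun l _ => by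
          rw [← Real.rpow_mul (norm_nonneg _), ← Real.rpow_mul (norm_nonneg _), mul_comm]

end Norm

lemma spectralRadius_mul_comm {A : Type*} [Ring A] [Algebra ℂ A] (a b : A) :
    spectralRadius ℂ (a * b) = spectralRadius ℂ (b * a) := by
  have key : ∀ x y : A, spectralRadius ℂ (x*y) ≤ spectralRadius ℂ (y*x) := by
    intro x y
    rw [spectralRadius, spectralRadius]
    refine iSup₂_le fun k hk => ?_
    by_cases h0 : k = 0
    · simp [h0]
    · have hmem : k ∈ spectrum ℂ (x*y) \ {0} := ⟨hk, by simpa using h0⟩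
      rw [spectrum.nonzero_mul_comm] at hmem
      exact le_iSup₂_of_le k hmem.1 le_rfl
  exact le_antisymm (key a b) (key b a)

lemma specRad_mul_comm {N : Type*} [Fintype N] [DecidableEq N] (X Y : Matrix N N ℝ) :
    specRad (X * Y) = specRad (Y * X) := by
  have hmap : ∀ (U V : Matrix N N ℝ),
      (U * V).map Complex.ofReal = U.map Complex.ofReal * V.map Complex.ofReal := fun U V =>
    Matrix.map_mul (L := U) (M := V) (f := Complex.ofRealHom)
  rw [specRad, specRad, hmap, hmap, spectralRadius_mul_comm]

lemma specRad_nonneg {N : Type*} [Fintype N] [DecidableEq N] (M : Matrix N N ℝ) :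
    0 ≤ specRad M := ENNReal.toReal_nonneg

lemma specRad_cycProd_eq {m : ℕ} [NeZero m] {N : Type*} [Fintype N] [DecidableEq N]
    (A : Fin m → Matrix N N ℝ) (j : Fin m) :
    specRad (cycProd A j) = specRad (cycProd A 0) := by
  rw [cycProd_eq_ppL, cycProd_eq_ppL]
  have h1 : ppL A m j = ppL A (m - j.val) j * ppL A j.val (j + ((m - j.val : ℕ) : Fin m)) := by
    rw [← ppL_add, Nat.sub_add_cancel j.is_lt.le]
  have h2 : ppL A m 0
      = ppL A j.val 0 * ppL A (m - j.val) ((0 : Fin m) + ((j.val : ℕ) : Fin m)) := by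
    rw [← ppL_add, Nat.add_sub_cancel' j.is_lt.le]
  have e1 : j + ((m - j.val : ℕ) : Fin m) = 0 := by
    have hc : ((m - j.val : ℕ) : Fin m) = ((m : ℕ) : Fin m) - ((j.val : ℕ) : Fin m) :=
      Nat.cast_sub j.is_lt.le
    rw [hc, Fin.natCast_self, Fin.cast_val_eq_self, zero_sub, add_neg_cancel]
  have e2 : (0 : Fin m) + ((j.val : ℕ) : Fin m) = j := by
    rw [zero_add, Fin.cast_val_eq_self]
  rw [h1, h2, e1, e2, specRad_mul_comm]

end StmtAux

theorem stmt8 {m : ℕ} (hm : 0 < m) {N : Type*} [Fintype N] [DecidableEq N]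
    (A : Fin m → Matrix N N ℝ) (hA : ∀ k, ∀ i j, 0 ≤ A k i j) :
    specRad (hadGeo A (fun _ => (1 : ℝ) / m)) ≤
        specRad (hadGeo (cycProd A) (fun _ => (1 : ℝ) / m)) ^ ((1 : ℝ) / m) ∧
      specRad (hadGeo (cycProd A) (fun _ => (1 : ℝ) / m)) ^ ((1 : ℝ) / m) ≤
        specRad (List.ofFn A).prod ^ ((1 : ℝ) / m) := by
  haveI : NeZero m := ⟨hm.ne'⟩
  have hmR : (0:ℝ) < (m:ℝ) := by exact_mod_cast hm
  set w : Fin m → ℝ := fun _ => (1:ℝ)/(m:ℝ) with hwdef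
  have hwpos : ∀ l : Fin m, 0 < w l := fun _ => by positivity
  have hw1 : ∑ l, w l = 1 := by
    rw [hwdef]
    rw [Finset.sum_const, Finset.card_univ, Fintype.card_fin, nsmul_eq_mul]
    field_simp
  have hP : ∀ l i j, 0 ≤ cycProd A l i j := by
    intro l
    rw [StmtAux.cycProd_eq_ppL]
    exact StmtAux.ppL_nonneg hA m l
  have hB : ∀ i j, 0 ≤ hadGeo A w i j := StmtAux.hadGeo_nonneg A w hA
  have hC : ∀ i j, 0 ≤ hadGeo (cycProd A) w i j := StmtAux.hadGeo_nonneg _ w hP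
  -- claim 1
  have hBmC : ∀ i j, ((hadGeo A w) ^ m) i j ≤ hadGeo (cycProd A) w i j := by
    intro i j
    have h := StmtAux.pow_hadGeo_le A hA ((1:ℝ)/(m:ℝ)) hwpos hw1 m i j
    have heq : (fun l => StmtAux.ppL A m l) = cycProd A := by
      funext l
      rw [StmtAux.cycProd_eq_ppL]
    rwa [heq] at h
  have h1 : ∀ s : ℕ, ∀ i j, ((hadGeo A w) ^ (m * s)) i j ≤ ((hadGeo (cycProd A) w) ^ s) i j := by
    intro s i j
    rw [pow_mul]
    exact StmtAux.pow_mono' (StmtAux.pow_nonneg' hB m) hBmC s i j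
  have claim1 : specRad (hadGeo A w) ≤ specRad (hadGeo (cycProd A) w) ^ ((1:ℝ)/m) :=
    StmtAux.claim1_aux hm hB h1
  -- claim 2
  have h2core : ∀ s : ℕ, ∀ i j, ((hadGeo (cycProd A) w) ^ s) i j
      ≤ hadGeo (fun l => (cycProd A l) ^ s) w i j :=
    StmtAux.pow_hadGeo_le' (cycProd A) hP w hwpos hw1
  have claim2 : specRad (hadGeo (cycProd A) w) ≤ ∏ l, specRad (cycProd A l) ^ ((1:ℝ)/m) :=
    StmtAux.claim2_aux hm hP hC h2core
  have hprod : ∏ l, specRad (cycProd A l) ^ ((1:ℝ)/m) = specRad (cycProd A 0) := by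
    have hcongr : ∀ l ∈ Finset.univ, specRad (cycProd A l) ^ ((1:ℝ)/m)
        = specRad (cycProd A 0) ^ ((1:ℝ)/m) := fun l _ => by
      rw [StmtAux.specRad_cycProd_eq]
    rw [Finset.prod_congr rfl hcongr, Finset.prod_const, Finset.card_univ, Fintype.card_fin,
      ← Real.rpow_natCast (specRad (cycProd A 0) ^ ((1:ℝ)/m)) m,
      ← Real.rpow_mul (StmtAux.specRad_nonneg _)]
    rw [show (1:ℝ)/m * (m:ℕ) = 1 by field_simp]
    exact Real.rpow_one _
  have hofn : (List.ofFn A).prod = cycProd A 0 := by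
    rw [cycProd]
    refine congrArg List.prod (congrArg List.ofFn (funext fun k => ?_))
    rw [zero_add]
  constructor
  · exact claim1
  · rw [hofn]
    exact Real.rpow_le_rpow (StmtAux.specRad_nonneg _) (claim2.trans_eq hprod) (by positivity)
end
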